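/- arXiv:2403.09610 — 3 statements merged into one kernel-verified Lean document; each statement's English description precedes it below -/
import Mathlib

section
/- The proximity operator of the proximal comixture is given explicitly by prox_{comix(L_k,g_k)_{1≤k≤p}} = Id − ∑_{k=1}^p α_k L_k* ∘ (Id − prox_{g_k}) ∘ L_k, where for h ∈ Γ₀(K) on a real Hilbert space K, prox_h(x) is the unique minimizer over z ∈ K of h(z) + ‖x−z‖²/2. -/
open scoped RealInnerProductSpace
open Filter

noncomputable section

variable {K : Type*} [NormedAddCommGroup K] [InnerProductSpace ℝ K]

/-- Normalized quadratic kernel `Q_K = ‖·‖²/2` (as an extended real). -/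
def QK (x : K) : EReal := ((‖x‖ ^ 2 / 2 : ℝ) : EReal)

/-- Fenchel conjugate `f* : u ↦ sup_x (⟨x,u⟩ − f(x))`. -/
def fconj (f : K → EReal) (u : K) : EReal := ⨆ x : K, ((⟪x, u⟫ : ℝ) : EReal) - f x

/-- Moreau envelope `f □ Q_K : x ↦ inf_z (f(z) + ‖x−z‖²/2)`. -/
def menv (f : K → EReal) (x : K) : EReal := ⨅ z : K, f z + QK (x - z)

/-- Convexity of an extended-real-valued function. -/
def ConvexFnE (f : K → EReal) : Prop :=
  ∀ x y : K, ∀ a b : ℝ, 0 ≤ a → 0 ≤ b → a + b = 1 →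
    f (a • x + b • y) ≤ (a : EReal) * f x + (b : EReal) * f y

/-- Properness: nowhere `−∞` and somewhere finite. -/
def ProperFn (f : K → EReal) : Prop := (∀ x, f x ≠ ⊥) ∧ ∃ x, f x ≠ ⊤

/-- The class `Γ₀(K)` of proper lower semicontinuous convex functions. -/
def Gamma0 (f : K → EReal) : Prop := ProperFn f ∧ LowerSemicontinuous f ∧ ConvexFnE f

/-- `P` is the proximity operator of `g`: for every `x`, `P x` is the unique
minimizer of `z ↦ g(z) + ‖x−z‖²/2`. -/
def IsProx (g : K → EReal) (P : K → K) : Prop :=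
  ∀ x : K,
    (∀ z : K, g (P x) + QK (x - P x) ≤ g z + QK (x - z)) ∧
    (∀ z : K, (∀ w : K, g z + QK (x - z) ≤ g w + QK (x - w)) → z = P x)

/-- The convex subdifferential of `f` at `x`. -/
def subdiff (f : K → EReal) (x : K) : Set K :=
  {u : K | ∀ z : K, ((⟪z - x, u⟫ : ℝ) : EReal) + f x ≤ f z}

variable {H : Type*} [NormedAddCommGroup H] [InnerProductSpace ℝ H]
  {p : ℕ} {G : Fin p → Type*} [∀ k, NormedAddCommGroup (G k)]
  [∀ k, InnerProductSpace ℝ (G k)]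

/-- The proximal comixture `comix(L_k, g_k)_{1≤k≤p}
  = ((∑_k α_k (g_k □ Q_{G_k}) ∘ L_k)* − Q_H)*`. -/
def comix (L : ∀ k, H →L[ℝ] G k) (g : ∀ k, (G k) → EReal) (α : Fin p → ℝ) :
    H → EReal :=
  fconj (fun u => fconj (fun x => ∑ k, (α k : EReal) * menv (g k) (L k x)) u - QK u)


def erealHom : ℝ →+ EReal :=
  ⟨⟨(fun r => (r : EReal)), EReal.coe_zero⟩, fun a b => EReal.coe_add a b⟩

lemma coe_add_QK (r : ℝ) (v : K) :
    (r : EReal) + QK v = ((r + ‖v‖ ^ 2 / 2 : ℝ) : EReal) := by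
  rw [QK, ← EReal.coe_add]

lemma coe_sub_QK (r : ℝ) (v : K) :
    (r : EReal) - QK v = ((r - ‖v‖ ^ 2 / 2 : ℝ) : EReal) := by
  rw [QK, ← EReal.coe_sub]

lemma ineq_limit {A s C : ℝ} (hC : 0 ≤ C)
    (h : ∀ t : ℝ, 0 < t → t ≤ 1 → A ≤ s + t * C) : A ≤ s := by
  by_contra hlt
  push_neg at hlt
  set ε := A - s with hε
  have hε0 : 0 < ε := by linarith
  have ht0 : 0 < min 1 (ε / (2 * (C + 1))) := by
    apply lt_min one_pos; positivity
  have h1 := h _ ht0 (min_le_left _ _)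
  have h2 : min 1 (ε / (2 * (C + 1))) * C ≤ ε / 2 := by
    calc min 1 (ε / (2 * (C + 1))) * C ≤ (ε / (2 * (C + 1))) * C :=
          mul_le_mul_of_nonneg_right (min_le_right _ _) hC
      _ ≤ ε / 2 := by
          rw [div_mul_eq_mul_div, div_le_div_iff₀ (by positivity) (by norm_num)]
          nlinarith
  linarith

lemma menv_facts {g : K → EReal} (hbot : ∀ x, g x ≠ ⊥) (hfin : ∃ x, g x ≠ ⊤)
    (hconv : ConvexFnE g) (b q : K)
    (hmin : ∀ z : K, g q + QK (b - q) ≤ g z + QK (b - z)) :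
    ∃ mb : ℝ, menv g b = (mb : EReal) ∧
      ∀ y : K, ∃ s : ℝ, menv g y = (s : EReal) ∧
        mb + ⟪y - b, b - q⟫ ≤ s ∧
        s ≤ mb + ⟪y - b, b - q⟫ + ‖y - b‖ ^ 2 / 2 := by
  obtain ⟨x0, hx0⟩ := hfin
  lift g x0 to ℝ using ⟨hx0, hbot x0⟩ with s0 hs0
  have hq_top : g q ≠ ⊤ := by
    intro h
    have h1 := hmin x0
    rw [h, ← hs0, coe_add_QK] at h1
    have h2 : (⊤ : EReal) + QK (b - q) = ⊤ := by rw [QK]; simp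
    rw [h2] at h1
    exact (EReal.coe_ne_top _) (top_le_iff.mp h1)
  lift g q to ℝ using ⟨hq_top, hbot q⟩ with r hr
  -- subgradient inequality
  have hsub : ∀ z : K, ((r + ⟪b - q, z - q⟫ : ℝ) : EReal) ≤ g z := by
    intro z
    rcases eq_or_ne (g z) ⊤ with hz | hz
    · rw [hz]; exact le_top
    lift g z to ℝ using ⟨hz, hbot z⟩ with s hs
    rw [EReal.coe_le_coe_iff]
    apply ineq_limit (C := ‖z - q‖ ^ 2 / 2) (by positivity)
    intro t ht0 ht1
    have hcv := hconv q z (1 - t) t (by linarith) ht0.le (by ring)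
    rw [← hr, ← hs] at hcv
    set zt := (1 - t) • q + t • z with hzt
    have h1 : g zt ≤ (((1 - t) * r + t * s : ℝ) : EReal) := by
      refine hcv.trans (le_of_eq ?_); norm_cast
    have h3 : g zt + QK (b - zt) ≤ (((1 - t) * r + t * s + ‖b - zt‖ ^ 2 / 2 : ℝ) : EReal) := by
      calc g zt + QK (b - zt) ≤ (((1 - t) * r + t * s : ℝ) : EReal) + QK (b - zt) :=
            add_le_add_left h1 _
        _ = _ := coe_add_QK _ _
    have h4' := (hmin zt).trans h3
    rw [coe_add_QK, EReal.coe_le_coe_iff] at h4'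
    have hbzt : b - zt = (b - q) - t • (z - q) := by rw [hzt]; module
    have e1 : ‖(b - q) - t • (z - q)‖ ^ 2
        = ‖b - q‖ ^ 2 - 2 * ⟪b - q, t • (z - q)⟫ + ‖t • (z - q)‖ ^ 2 :=
      norm_sub_sq_real _ _
    have e2 : ⟪b - q, t • (z - q)⟫ = t * ⟪b - q, z - q⟫ := real_inner_smul_right _ _ t
    have e3 : ‖t • (z - q)‖ ^ 2 = t ^ 2 * ‖z - q‖ ^ 2 := by
      rw [norm_smul, Real.norm_eq_abs, mul_pow, sq_abs]
    rw [hbzt, e1, e2, e3] at h4'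
    have key : t * (r + ⟪b - q, z - q⟫) ≤ t * (s + t * (‖z - q‖ ^ 2 / 2)) := by nlinarith
    exact (mul_le_mul_iff_right₀ ht0).mp key
  -- menv value at b
  have hmb : menv g b = ((r + ‖b - q‖ ^ 2 / 2 : ℝ) : EReal) := by
    apply le_antisymm
    · have h := iInf_le (fun z => g z + QK (b - z)) q
      refine le_trans h (le_of_eq ?_)
      rw [← hr, coe_add_QK]
    · apply le_iInf; intro z
      exact le_trans (le_of_eq (coe_add_QK r (b - q)).symm) (hmin z)
  refine ⟨r + ‖b - q‖ ^ 2 / 2, hmb, fun y => ?_⟩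
  have hub : menv g y
      ≤ ((r + ‖b - q‖ ^ 2 / 2 + ⟪y - b, b - q⟫ + ‖y - b‖ ^ 2 / 2 : ℝ) : EReal) := by
    have h := iInf_le (fun z => g z + QK (y - z)) q
    refine le_trans h ?_
    rw [← hr, coe_add_QK, EReal.coe_le_coe_iff]
    have e : y - q = (y - b) + (b - q) := by abel
    have e1 : ‖(y - b) + (b - q)‖ ^ 2
        = ‖y - b‖ ^ 2 + 2 * ⟪y - b, b - q⟫ + ‖b - q‖ ^ 2 := norm_add_sq_real _ _
    rw [e, e1]; linarith
  have hlb : ((r + ‖b - q‖ ^ 2 / 2 + ⟪y - b, b - q⟫ : ℝ) : EReal) ≤ menv g y := by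
    apply le_iInf; intro z
    have h1 : ((r + ⟪b - q, z - q⟫ : ℝ) : EReal) + QK (y - z) ≤ g z + QK (y - z) :=
      add_le_add_left (hsub z) _
    refine le_trans ?_ h1
    rw [coe_add_QK, EReal.coe_le_coe_iff]
    have e : (y - b) - (z - q) = (y - z) - (b - q) := by abel
    have e2 : ⟪y - b, b - q⟫ - ⟪z - q, b - q⟫ = ⟪y - z, b - q⟫ - ‖b - q‖ ^ 2 := by
      rw [← inner_sub_left, e, inner_sub_left, real_inner_self_eq_norm_sq]
    have e3 : 0 ≤ ‖y - z‖ ^ 2 - 2 * ⟪y - z, b - q⟫ + ‖b - q‖ ^ 2 := by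
      rw [← norm_sub_sq_real]; positivity
    have e4 : ⟪b - q, z - q⟫ = ⟪z - q, b - q⟫ := real_inner_comm _ _
    linarith
  lift menv g y to ℝ using
    ⟨(hub.trans_lt (EReal.coe_lt_top _)).ne, ((EReal.bot_lt_coe _).trans_le hlb).ne'⟩ with s hs
  exact ⟨s, rfl, by exact_mod_cast hlb, by exact_mod_cast hub⟩

lemma key_lemma (φ : H → EReal) (S : H → ℝ) (x w : H)
    (hφ : ∀ y, φ y = ((S y : ℝ) : EReal))
    (hS1 : ∀ y : H, S x + ⟪y - x, w⟫ ≤ S y)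
    (hS2 : ∀ y : H, S y ≤ S x + ⟪y - x, w⟫ + ‖y - x‖ ^ 2 / 2) :
    (∀ z : H, fconj (fun u => fconj φ u - QK u) (x - w) + QK (x - (x - w))
        ≤ fconj (fun u => fconj φ u - QK u) z + QK (x - z)) ∧
    (∀ z : H, (∀ v : H, fconj (fun u => fconj φ u - QK u) z + QK (x - z)
        ≤ fconj (fun u => fconj φ u - QK u) v + QK (x - v)) → z = x - w) := by
  have hF1 : fconj φ w = ((⟪x, w⟫ - S x : ℝ) : EReal) := by
    apply le_antisymm
    · apply iSup_le; intro y
      rw [hφ y, ← EReal.coe_sub, EReal.coe_le_coe_iff]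
      have h := hS1 y
      have e : ⟪y - x, w⟫ = ⟪y, w⟫ - ⟪x, w⟫ := inner_sub_left _ _ _
      linarith
    · have h := le_iSup (fun y => ((⟪y, w⟫ : ℝ) : EReal) - φ y) x
      rw [hφ x, ← EReal.coe_sub] at h
      exact h
  have hF2 : ∀ u : H, ((⟪x, u⟫ - S x + ‖u - w‖ ^ 2 / 2 : ℝ) : EReal) ≤ fconj φ u := by
    intro u
    have h := le_iSup (fun y => ((⟪y, u⟫ : ℝ) : EReal) - φ y) (x + (u - w))
    rw [hφ, ← EReal.coe_sub] at h
    refine le_trans ?_ h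
    rw [EReal.coe_le_coe_iff]
    have h2 := hS2 (x + (u - w))
    rw [add_sub_cancel_left] at h2
    have e1 : ⟪x + (u - w), u⟫ = ⟪x, u⟫ + ⟪u - w, u⟫ := inner_add_left _ _ _
    have e2 : ⟪u - w, u⟫ - ⟪u - w, w⟫ = ‖u - w‖ ^ 2 := by
      rw [← inner_sub_right, real_inner_self_eq_norm_sq]
    linarith
  have hH1 : ∀ z : H, ((S x + ‖x - z - w‖ ^ 2 / 2 - ‖x - z‖ ^ 2 / 2 : ℝ) : EReal)
      ≤ fconj (fun u => fconj φ u - QK u) z := by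
    intro z
    have h := le_iSup (fun u => ((⟪u, z⟫ : ℝ) : EReal) - (fconj φ u - QK u)) w
    rw [hF1, coe_sub_QK, ← EReal.coe_sub] at h
    refine le_trans ?_ h
    rw [EReal.coe_le_coe_iff]
    have e1 : ‖x - z - w‖ ^ 2 = ‖x - z‖ ^ 2 - 2 * ⟪x - z, w⟫ + ‖w‖ ^ 2 := norm_sub_sq_real _ _
    have e2 : ⟪x - z, w⟫ = ⟪x, w⟫ - ⟪z, w⟫ := inner_sub_left _ _ _
    have e3 : ⟪w, z⟫ = ⟪z, w⟫ := real_inner_comm _ _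
    linarith
  have hH2 : fconj (fun u => fconj φ u - QK u) (x - w) ≤ ((S x - ‖w‖ ^ 2 / 2 : ℝ) : EReal) := by
    show (⨆ u : H, ((⟪u, x - w⟫ : ℝ) : EReal) - (fconj φ u - QK u)) ≤ _
    apply iSup_le; intro u
    rcases eq_or_ne (fconj φ u) ⊤ with htop | htop
    · rw [htop, QK]
      simp
    · have hne : fconj φ u ≠ ⊥ := by
        intro hb
        have h := hF2 u
        rw [hb] at h
        exact (EReal.coe_ne_bot _) (le_bot_iff.mp h)
      lift fconj φ u to ℝ using ⟨htop, hne⟩ with t ht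
      have hF2' : ⟪x, u⟫ - S x + ‖u - w‖ ^ 2 / 2 ≤ t := by
        have h := hF2 u
        rw [← ht] at h
        exact_mod_cast h
      rw [coe_sub_QK, ← EReal.coe_sub, EReal.coe_le_coe_iff]
      have e1 : ‖u - w‖ ^ 2 = ‖u‖ ^ 2 - 2 * ⟪u, w⟫ + ‖w‖ ^ 2 := norm_sub_sq_real _ _
      have e2 : ⟪u, x - w⟫ = ⟪u, x⟫ - ⟪u, w⟫ := inner_sub_right _ _ _
      have e3 : ⟪u, x⟫ = ⟪x, u⟫ := real_inner_comm _ _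
      linarith
  have hlow : ∀ z : H, ((S x + ‖x - z - w‖ ^ 2 / 2 : ℝ) : EReal)
      ≤ fconj (fun u => fconj φ u - QK u) z + QK (x - z) := by
    intro z
    have h := add_le_add_left (hH1 z) (QK (x - z))
    refine le_trans (le_of_eq ?_) h
    rw [coe_add_QK, EReal.coe_eq_coe_iff]
    ring
  have hup : fconj (fun u => fconj φ u - QK u) (x - w) + QK (x - (x - w))
      ≤ ((S x : ℝ) : EReal) := by
    have h := add_le_add_left hH2 (QK (x - (x - w)))
    refine le_trans h (le_of_eq ?_)
    rw [sub_sub_cancel]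
    rw [coe_add_QK, EReal.coe_eq_coe_iff]
    ring
  constructor
  · intro z
    refine le_trans hup (le_trans ?_ (hlow z))
    rw [EReal.coe_le_coe_iff]
    have := sq_nonneg ‖x - z - w‖
    linarith
  · intro z hz
    have h1 : fconj (fun u => fconj φ u - QK u) z + QK (x - z) ≤ ((S x : ℝ) : EReal) :=
      (hz (x - w)).trans hup
    have h2 := (hlow z).trans h1
    rw [EReal.coe_le_coe_iff] at h2
    have h5 : ‖x - z - w‖ ^ 2 = 0 := le_antisymm (by linarith) (sq_nonneg _)
    have h6 : x - z - w = 0 := norm_eq_zero.mp ((pow_eq_zero_iff two_ne_zero).mp h5)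
    have h7 : x - z = w := sub_eq_zero.mp h6
    rw [← h7]
    exact (sub_sub_cancel x z).symm

/-- Proposition 3.2(ii): the proximity operator of the proximal comixture is
`Id − ∑_k α_k L_k* ∘ (Id − prox_{g_k}) ∘ L_k`. -/
theorem prox_comix [CompleteSpace H] [∀ k, CompleteSpace (G k)]
    (L : ∀ k, H →L[ℝ] G k) (g : ∀ k, (G k) → EReal) (α : Fin p → ℝ)
    (hg : ∀ k, Gamma0 (g k)) (hL : ∀ k, ‖L k‖ ≤ 1)
    (hα : ∀ k, α k ∈ Set.Ioc (0 : ℝ) 1) (hαsum : ∑ k, α k = 1)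
    (P : ∀ k, G k → G k) (hP : ∀ k, IsProx (g k) (P k)) :
    IsProx (comix L g α)
      (fun x => x - ∑ k, α k •
        (ContinuousLinearMap.adjoint (L k)) (L k x - P k (L k x))) := by

  intro x
  have hfacts : ∀ k, ∃ mb : ℝ, menv (g k) (L k x) = (mb : EReal) ∧
      ∀ y : G k, ∃ s : ℝ, menv (g k) y = (s : EReal) ∧
        mb + ⟪y - L k x, L k x - P k (L k x)⟫ ≤ s ∧
        s ≤ mb + ⟪y - L k x, L k x - P k (L k x)⟫ + ‖y - L k x‖ ^ 2 / 2 :=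
    fun k => menv_facts ((hg k).1.1) ((hg k).1.2) ((hg k).2.2) (L k x) (P k (L k x))
      (fun z => (hP k (L k x)).1 z)
  choose mb hmb hrest using hfacts
  choose m hm1 hm2 hm3 using fun k (y : H) => hrest k (L k y)
  have hmx : ∀ k, m k x = mb k := fun k => by
    have h := (hm1 k x).symm.trans (hmb k); exact_mod_cast h
  have hm2' : ∀ k (y : H), m k x + ⟪L k y - L k x, L k x - P k (L k x)⟫ ≤ m k y :=
    fun k y => by rw [hmx]; exact hm2 k y
  have hm3' : ∀ k (y : H),
      m k y ≤ m k x + ⟪L k y - L k x, L k x - P k (L k x)⟫ + ‖L k y - L k x‖ ^ 2 / 2 :=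
    fun k y => by rw [hmx]; exact hm3 k y
  set n : ∀ k, G k := fun k => L k x - P k (L k x) with hn
  set w : H := ∑ k, α k • (ContinuousLinearMap.adjoint (L k)) (n k) with hw
  set S : H → ℝ := fun y => ∑ k, α k * m k y with hS
  have hα0 : ∀ k, (0:ℝ) ≤ α k := fun k => (hα k).1.le
  have hΦ : ∀ y : H, (∑ k, (α k : EReal) * menv (g k) (L k y)) = ((S y : ℝ) : EReal) := by
    intro y
    rw [Finset.sum_congr rfl (fun k _ => by
      rw [hm1 k y]; norm_cast : ∀ k ∈ Finset.univ,
        (α k : EReal) * menv (g k) (L k y) = (((α k * m k y : ℝ)) : EReal))]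
    exact (map_sum erealHom (fun k => α k * m k y) Finset.univ).symm
  have hwip : ∀ v : H, ⟪v, w⟫ = ∑ k, α k * ⟪L k v, n k⟫ := by
    intro v
    rw [hw, inner_sum]
    refine Finset.sum_congr rfl fun k _ => ?_
    rw [real_inner_smul_right, ContinuousLinearMap.adjoint_inner_right]
  have hLle : ∀ k (v : H), ‖L k v‖ ^ 2 ≤ ‖v‖ ^ 2 := by
    intro k v
    have h1 : ‖L k v‖ ≤ ‖v‖ := by
      calc ‖L k v‖ ≤ ‖L k‖ * ‖v‖ := (L k).le_opNorm v
        _ ≤ 1 * ‖v‖ := mul_le_mul_of_nonneg_right (hL k) (norm_nonneg v)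
        _ = ‖v‖ := one_mul _
    exact pow_le_pow_left₀ (norm_nonneg _) h1 2
  have hS1 : ∀ y : H, S x + ⟪y - x, w⟫ ≤ S y := by
    intro y
    rw [hwip]
    calc S x + ∑ k, α k * ⟪L k (y - x), n k⟫
        = ∑ k, (α k * m k x + α k * ⟪L k (y - x), n k⟫) := by
          rw [Finset.sum_add_distrib]
      _ ≤ ∑ k, α k * m k y := by
          refine Finset.sum_le_sum fun k _ => ?_
          have h := hm2' k y
          rw [← map_sub (L k) y x] at h
          nlinarith [mul_le_mul_of_nonneg_left h (hα0 k)]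
  have hS2 : ∀ y : H, S y ≤ S x + ⟪y - x, w⟫ + ‖y - x‖ ^ 2 / 2 := by
    intro y
    rw [hwip]
    calc S y ≤ ∑ k, (α k * m k x + α k * ⟪L k (y - x), n k⟫ + α k * (‖y - x‖ ^ 2 / 2)) := by
          refine Finset.sum_le_sum fun k _ => ?_
          have h := hm3' k y
          rw [← map_sub (L k) y x] at h
          have h2 := hLle k (y - x)
          nlinarith [mul_le_mul_of_nonneg_left h (hα0 k),
            mul_le_mul_of_nonneg_left h2 (hα0 k)]
      _ = S x + (∑ k, α k * ⟪L k (y - x), n k⟫) + ‖y - x‖ ^ 2 / 2 := by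
          rw [Finset.sum_add_distrib, Finset.sum_add_distrib, ← Finset.sum_mul, hαsum, one_mul]
  obtain ⟨hmin', huniq'⟩ :=
    key_lemma (fun y => ∑ k, (α k : EReal) * menv (g k) (L k y)) S x w hΦ hS1 hS2
  constructor
  · intro z
    exact hmin' z
  · intro z hz
    exact huniq' z hz


end
end

section
/- If the combined operator is a coisometry, the proximal comixture reduces to the standard composite average: let 𝒢 be the product vector space G₁×⋯×G_p equipped with the scalar product ((y_k),(v_k)) ↦ ∑_{k=1}^p α_k⟨y_k,v_k⟩, and let L : H → 𝒢 : x ↦ (L_k x)_{1≤k≤p}. If L ∘ L* = Id on 𝒢, then comix(L_k,g_k)_{1≤k≤p} = ∑_{k=1}^p α_k g_k ∘ L_k. -/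
open scoped RealInnerProductSpace
open Filter

noncomputable section

variable {K : Type*} [NormedAddCommGroup K] [InnerProductSpace ℝ K]

/-! EReal helpers -/

lemma cmx_add_ne_bot {a b : EReal} (ha : a ≠ ⊥) (hb : b ≠ ⊥) : a + b ≠ ⊥ := by
  intro h
  rcases EReal.add_eq_bot_iff.1 h with h | h <;> simp_all

lemma cmx_sum_ne_bot {ι : Type*} (s : Finset ι) (F : ι → EReal) (h : ∀ i ∈ s, F i ≠ ⊥) :
    ∑ i ∈ s, F i ≠ ⊥ := by
  classical
  induction s using Finset.induction_on with
  | empty => simp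
  | @insert a s' hi ih =>
    rw [Finset.sum_insert hi]
    exact cmx_add_ne_bot (h a (by simp)) (ih fun i hi' => h i (by simp [hi']))

lemma cmx_coe_mul_ne_bot {c : ℝ} (hc : 0 < c) {a : EReal} (ha : a ≠ ⊥) :
    (c : EReal) * a ≠ ⊥ := by
  induction a using EReal.rec with
  | bot => simp_all
  | coe t => rw [← EReal.coe_mul]; exact EReal.coe_ne_bot _
  | top => rw [EReal.coe_mul_top_of_pos hc]; exact top_ne_bot

lemma cmx_coe_mul_add {c : ℝ} (hc : 0 < c) (u v : EReal) :
    (c : EReal) * (u + v) = (c : EReal) * u + (c : EReal) * v := by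
  induction u using EReal.rec with
  | bot => simp [EReal.coe_mul_bot_of_pos hc]
  | coe a =>
    induction v using EReal.rec with
    | bot => simp [EReal.coe_mul_bot_of_pos hc, ← EReal.coe_mul, ← EReal.coe_add]
    | coe b => rw [← EReal.coe_add, ← EReal.coe_mul, ← EReal.coe_mul, ← EReal.coe_mul,
        ← EReal.coe_add, mul_add]
    | top => rw [EReal.coe_add_top, EReal.coe_mul_top_of_pos hc, ← EReal.coe_mul,
        EReal.coe_add_top]
  | top =>
    induction v using EReal.rec with
    | bot => simp [EReal.coe_mul_bot_of_pos hc, EReal.coe_mul_top_of_pos hc]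
    | coe b => rw [EReal.top_add_coe, EReal.coe_mul_top_of_pos hc, ← EReal.coe_mul,
        EReal.top_add_coe]
    | top => rw [EReal.top_add_top, EReal.coe_mul_top_of_pos hc, EReal.top_add_top]

lemma cmx_coe_mul_sum {c : ℝ} (hc : 0 < c) {ι : Type*} (s : Finset ι) (F : ι → EReal) :
    (c : EReal) * ∑ i ∈ s, F i = ∑ i ∈ s, (c : EReal) * F i := by
  classical
  induction s using Finset.induction_on with
  | empty => simp
  | @insert a s' hi ih =>
    rw [Finset.sum_insert hi, Finset.sum_insert hi, cmx_coe_mul_add hc, ih]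

lemma cmx_mul_le_mul {c : ℝ} (hc : 0 ≤ c) {a b : EReal} (h : a ≤ b) :
    (c : EReal) * a ≤ (c : EReal) * b :=
  mul_le_mul_of_nonneg_left h (by exact_mod_cast hc)

lemma cmx_coe_mul_cancel {c : ℝ} (hc : c ≠ 0) (a : EReal) :
    ((1 / c : ℝ) : EReal) * ((c : EReal) * a) = a := by
  rw [← mul_assoc, ← EReal.coe_mul, one_div, inv_mul_cancel₀ hc, EReal.coe_one, one_mul]

lemma cmx_mul_lt_mul_iff {c : ℝ} (hc : 0 < c) {a b : EReal} :
    (c : EReal) * a < (c : EReal) * b ↔ a < b := by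
  constructor
  · intro h
    by_contra hba
    exact absurd (cmx_mul_le_mul hc.le (not_lt.1 hba)) (not_le.2 h)
  · intro h
    by_contra hba
    have := cmx_mul_le_mul (c := 1 / c) (by positivity) (not_lt.1 hba)
    rw [cmx_coe_mul_cancel hc.ne', cmx_coe_mul_cancel hc.ne'] at this
    exact absurd this (not_le.2 h)

/-- addition of a real constant, as an order isomorphism of `EReal`. -/
def cmxAddIso (r : ℝ) : EReal ≃o EReal where
  toFun x := x + (r : EReal)
  invFun x := x - (r : EReal)
  left_inv x := EReal.add_sub_cancel_right
  right_inv x := EReal.sub_add_cancel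
  map_rel_iff' := by
    intro a b
    constructor
    · intro h
      have h2 := EReal.sub_le_sub h (le_refl (r : EReal))
      simp only [Equiv.coe_fn_mk] at h2
      rwa [EReal.add_sub_cancel_right, EReal.add_sub_cancel_right] at h2
    · intro h
      exact add_le_add_left h _

lemma cmx_iSup_add_coe {ι : Sort*} (T : ι → EReal) (r : ℝ) :
    (⨆ i, T i) + (r : EReal) = ⨆ i, (T i + (r : EReal)) :=
  _root_.map_iSup (cmxAddIso r) T

lemma cmx_neg_iInf {ι : Sort*} (T : ι → EReal) : -(⨅ i, T i) = ⨆ i, -T i := by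
  apply le_antisymm
  · have h : -(⨆ i, -T i) ≤ ⨅ i, T i := by
      apply le_iInf
      intro i
      exact EReal.neg_le.mp (by simpa using le_iSup (fun i => -T i) i)
    exact EReal.neg_le_of_neg_le h
  · exact iSup_le fun i => EReal.neg_le_neg_iff.mpr (iInf_le _ i)

lemma cmx_coe_sub_iInf {ι : Sort*} (T : ι → EReal) (a : ℝ) :
    (a : EReal) - ⨅ i, T i = ⨆ i, ((a : EReal) - T i) := by
  rw [sub_eq_add_neg, cmx_neg_iInf, add_comm, cmx_iSup_add_coe]
  exact iSup_congr fun i => by rw [add_comm, sub_eq_add_neg]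

lemma cmx_iSup_coe_add {ι : Sort*} [Nonempty ι] (f : ι → ℝ) (c : EReal) :
    ⨆ i, ((f i : EReal) + c) = (⨆ i, ((f i : ℝ) : EReal)) + c := by
  induction c using EReal.rec with
  | bot => simp [EReal.add_bot]
  | coe r => exact (cmx_iSup_add_coe (fun i => ((f i : ℝ) : EReal)) r).symm
  | top =>
    have h1 : ⨆ i, ((f i : EReal) + ⊤) = ⊤ := by
      obtain ⟨i⟩ := ‹Nonempty ι›
      refine le_antisymm le_top ?_
      have := le_iSup (fun i => ((f i : EReal) + ⊤)) i
      rwa [EReal.coe_add_top (f i)] at this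
    have h2 : (⨆ i, ((f i : ℝ) : EReal)) + ⊤ = ⊤ := by
      apply EReal.add_top_of_ne_bot
      obtain ⟨i⟩ := ‹Nonempty ι›
      exact fun h => by simpa [h] using le_iSup (fun i => ((f i : ℝ) : EReal)) i
    rw [h1, h2]
/-! fconj basics -/

lemma cmx_le_fconj (f : K → EReal) (u x : K) :
    ((⟪x, u⟫ : ℝ) : EReal) - f x ≤ fconj f u := le_iSup (fun x => ((⟪x, u⟫ : ℝ) : EReal) - f x) x

lemma cmx_fconj_le {f : K → EReal} {u : K} {M : ℝ}
    (h : ∀ x, ((⟪x, u⟫ : ℝ) : EReal) - f x ≤ (M : EReal)) : fconj f u ≤ (M : EReal) :=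
  iSup_le h

/-! epigraph -/

lemma cmx_epi_closed {f : K → EReal} (hf : LowerSemicontinuous f) :
    IsClosed {q : K × ℝ | f q.1 ≤ (q.2 : EReal)} := by
  have h := hf.isClosed_epigraph
  have hc : Continuous (fun q : K × ℝ => (q.1, (q.2 : EReal))) :=
    continuous_fst.prodMk (continuous_coe_real_ereal.comp continuous_snd)
  exact h.preimage hc

lemma cmx_epi_convex {f : K → EReal} (hf : ConvexFnE f) :
    Convex ℝ {q : K × ℝ | f q.1 ≤ (q.2 : EReal)} := by
  intro q hq q' hq' a b ha hb hab
  simp only [Set.mem_setOf_eq] at hq hq' ⊢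
  have h1 := hf q.1 q'.1 a b ha hb hab
  have h2 : (a : EReal) * f q.1 ≤ (a : EReal) * ((q.2 : ℝ) : EReal) :=
    cmx_mul_le_mul ha hq
  have h3 : (b : EReal) * f q'.1 ≤ (b : EReal) * ((q'.2 : ℝ) : EReal) :=
    cmx_mul_le_mul hb hq'
  have h4 : (a • q + b • q').1 = a • q.1 + b • q'.1 := rfl
  have h5 : ((a • q + b • q').2 : ℝ) = a * q.2 + b * q'.2 := rfl
  rw [h4, h5]
  refine h1.trans ((add_le_add h2 h3).trans ?_)
  rw [← EReal.coe_mul, ← EReal.coe_mul, ← EReal.coe_add]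

/-! separation -/

lemma cmx_sep {f : K → EReal} [CompleteSpace K] (hf : Gamma0 f) {x₀ : K} {r : ℝ}
    (hr : (r : EReal) < f x₀) :
    ∃ (u : K) (c s : ℝ), c ≤ 0 ∧
      (∀ q : K × ℝ, f q.1 ≤ (q.2 : EReal) → ⟪q.1, u⟫ + c * q.2 < s) ∧
      s < ⟪x₀, u⟫ + c * r := by
  have hconv := cmx_epi_convex hf.2.2
  have hclosed := cmx_epi_closed hf.2.1
  have hnotin : (x₀, r) ∉ {q : K × ℝ | f q.1 ≤ (q.2 : EReal)} := fun h => absurd h (not_le.2 hr)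
  obtain ⟨φ, s, hs1, hs2⟩ := geometric_hahn_banach_closed_point hconv hclosed hnotin
  set c := φ (0, 1) with hcdef
  set u := (InnerProductSpace.toDual ℝ K).symm (φ.comp (ContinuousLinearMap.inl ℝ K ℝ)) with hudef
  have hdec : ∀ (z : K) (t : ℝ), φ (z, t) = ⟪z, u⟫ + c * t := by
    intro z t
    have h1 : (z, t) = (z, (0:ℝ)) + t • ((0:K), (1:ℝ)) := by
      simp [Prod.ext_iff]
    have h2 : ⟪z, u⟫ = φ (z, 0) := by
      rw [hudef, real_inner_comm, InnerProductSpace.toDual_symm_apply]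
      rfl
    rw [h1, map_add, map_smul, h2, smul_eq_mul, mul_comm]
  have hc0 : c ≤ 0 := by
    by_contra hpos
    push_neg at hpos
    obtain ⟨x₁, hx₁⟩ := hf.1.2
    set t₁ := (f x₁).toReal with ht₁
    have hfx : f x₁ = (t₁ : EReal) := (EReal.coe_toReal hx₁ (hf.1.1 x₁)).symm
    obtain ⟨n, hn⟩ := exists_nat_gt ((s - ⟪x₁, u⟫ - c * t₁) / c)
    have hmem : f x₁ ≤ ((t₁ + n : ℝ) : EReal) := by
      rw [hfx]
      exact_mod_cast (by linarith [Nat.cast_nonneg (α := ℝ) n] : t₁ ≤ t₁ + (n:ℝ))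
    have h5 := hs1 (x₁, t₁ + n) hmem
    rw [hdec] at h5
    have hn' : s - ⟪x₁, u⟫ - c * t₁ < (n : ℝ) * c := (div_lt_iff₀ hpos).1 hn
    nlinarith [h5, hn']
  refine ⟨u, c, s, hc0, ?_, ?_⟩
  · intro q hq
    have := hs1 q hq
    rwa [← hdec q.1 q.2, Prod.mk.eta]
  · have := hs2
    rwa [hdec] at this

lemma cmx_sep_minorant {f : K → EReal} (hbot : ∀ x, f x ≠ ⊥) {u : K} {c s : ℝ} (hc : c < 0)
    (hsep : ∀ q : K × ℝ, f q.1 ≤ (q.2 : EReal) → ⟪q.1, u⟫ + c * q.2 < s) :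
    ∀ x, ((⟪x, (1 / (-c)) • u⟫ : ℝ) : EReal) - f x ≤ ((s / (-c) : ℝ) : EReal) := by
  intro x
  have hcpos : 0 < -c := by linarith
  by_cases hx : f x = ⊤
  · rw [hx, EReal.sub_top]; exact bot_le
  · set t := (f x).toReal with ht
    have hfx : f x = (t : EReal) := (EReal.coe_toReal hx (hbot x)).symm
    have hepi : ⟪x, u⟫ + c * t < s := hsep (x, t) (le_of_eq hfx)
    rw [hfx, ← EReal.coe_sub, EReal.coe_le_coe_iff, real_inner_smul_right]
    have hcne : c ≠ 0 := ne_of_lt hc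
    have e : 1 / (-c) * ⟪x, u⟫ - t = (⟪x, u⟫ + c * t) / (-c) := by
      field_simp
      ring
    rw [e]
    exact div_le_div_of_nonneg_right hepi.le hcpos.le

lemma cmx_exists_minorant {f : K → EReal} [CompleteSpace K] (hf : Gamma0 f) :
    ∃ (w : K) (M : ℝ), ∀ x, ((⟪x, w⟫ : ℝ) : EReal) - f x ≤ (M : EReal) := by
  obtain ⟨x₁, hx₁⟩ := hf.1.2
  set t₁ := (f x₁).toReal with ht₁
  have hfx : f x₁ = (t₁ : EReal) := (EReal.coe_toReal hx₁ (hf.1.1 x₁)).symm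
  have hr : ((t₁ - 1 : ℝ) : EReal) < f x₁ := by
    rw [hfx]; exact_mod_cast (by linarith : t₁ - 1 < t₁)
  obtain ⟨u, c, s, hc0, hsep, hgt⟩ := cmx_sep hf hr
  have hclt : c < 0 := by
    rcases lt_or_eq_of_le hc0 with h | h
    · exact h
    · exfalso
      have h1 := hsep (x₁, t₁) (le_of_eq hfx)
      rw [h, zero_mul, add_zero] at h1
      rw [h, zero_mul, add_zero] at hgt
      linarith
  exact ⟨_, _, cmx_sep_minorant hf.1.1 hclt hsep⟩
lemma cmx_pair_le_biconj {f : K → EReal} {w : K} {M : ℝ}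
    (h : ∀ x, ((⟪x, w⟫ : ℝ) : EReal) - f x ≤ (M : EReal)) (x₀ : K) :
    ((⟪w, x₀⟫ - M : ℝ) : EReal) ≤ fconj (fconj f) x₀ := by
  have h1 : fconj f w ≤ (M : EReal) := cmx_fconj_le h
  have h2 := cmx_le_fconj (fconj f) x₀ w
  refine le_trans ?_ h2
  rw [EReal.coe_sub]
  exact EReal.sub_le_sub le_rfl h1

theorem cmx_biconj {f : K → EReal} [CompleteSpace K] (hf : Gamma0 f) :
    fconj (fconj f) = f := by
  funext x₀
  apply le_antisymm
  · -- fconj (fconj f) x₀ ≤ f x₀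
    apply iSup_le
    intro u
    by_cases hx : f x₀ = ⊤
    · rw [hx]; exact le_top
    · have hfx : f x₀ = ((f x₀).toReal : EReal) := (EReal.coe_toReal hx (hf.1.1 x₀)).symm
      set t := (f x₀).toReal with htdef
      have h1 : ((⟪x₀, u⟫ - t : ℝ) : EReal) ≤ fconj f u := by
        have h := cmx_le_fconj f u x₀
        rwa [hfx, ← EReal.coe_sub] at h
      by_cases htop : fconj f u = ⊤
      · rw [htop, EReal.sub_top]; exact bot_le
      · have hnb : fconj f u ≠ ⊥ := fun hb => by
          rw [hb, le_bot_iff] at h1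
          exact EReal.coe_ne_bot _ h1
        have hfc : fconj f u = ((fconj f u).toReal : EReal) := (EReal.coe_toReal htop hnb).symm
        set d := (fconj f u).toReal with hddef
        rw [hfc, hfx, ← EReal.coe_sub, EReal.coe_le_coe_iff]
        have hd : ⟪x₀, u⟫ - t ≤ d := by
          rw [hfc] at h1; exact_mod_cast h1
        rw [real_inner_comm]
        linarith
  · -- f x₀ ≤ fconj (fconj f) x₀
    by_contra hlt
    obtain ⟨r, hr1, hr2⟩ := EReal.lt_iff_exists_real_btwn.1 (not_le.1 hlt)
    refine absurd ?_ (not_le.2 hr1)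
    obtain ⟨u, c, s, hc0, hsep, hgt⟩ := cmx_sep hf hr2
    rcases lt_or_eq_of_le hc0 with hclt | hceq
    · -- c < 0
      have hcpos : 0 < -c := by linarith
      have hmin := cmx_sep_minorant hf.1.1 hclt hsep
      have hpair := cmx_pair_le_biconj hmin x₀
      refine le_trans ?_ hpair
      rw [EReal.coe_le_coe_iff, real_inner_smul_left, real_inner_comm]
      have hcne : c ≠ 0 := ne_of_lt hclt
      have e1 : 1 / (-c) * ⟪x₀, u⟫ - s / (-c) = (⟪x₀, u⟫ - s) / (-c) := by
        field_simp
        ring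
      rw [e1, le_div_iff₀ hcpos]
      nlinarith [hgt]
    · -- c = 0
      obtain ⟨w₀, M₀, hmin⟩ := cmx_exists_minorant hf
      rw [hceq, zero_mul, add_zero] at hgt
      have hsep0 : ∀ q : K × ℝ, f q.1 ≤ (q.2 : EReal) → ⟪q.1, u⟫ < s := by
        intro q hq
        have := hsep q hq
        rwa [hceq, zero_mul, add_zero] at this
      set d := ⟪x₀, u⟫ - s with hddef
      have hdpos : 0 < d := by rw [hddef]; linarith
      set n := max 0 ((r - ⟪w₀, x₀⟫ + M₀) / d) with hndef
      have hn0 : 0 ≤ n := le_max_left _ _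
      have key : ∀ x, ((⟪x, w₀ + n • u⟫ : ℝ) : EReal) - f x ≤ ((M₀ + n * s : ℝ) : EReal) := by
        intro x
        by_cases hx : f x = ⊤
        · rw [hx, EReal.sub_top]; exact bot_le
        · have hfx : f x = ((f x).toReal : EReal) := (EReal.coe_toReal hx (hf.1.1 x)).symm
          set t := (f x).toReal with htdef
          have hepi : ⟪x, u⟫ < s := hsep0 (x, t) (le_of_eq hfx)
          have hm : ⟪x, w₀⟫ - t ≤ M₀ := by
            have h := hmin x
            rw [hfx, ← EReal.coe_sub] at h
            exact_mod_cast h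
          rw [hfx, ← EReal.coe_sub, EReal.coe_le_coe_iff, inner_add_right,
            real_inner_smul_right]
          nlinarith [mul_le_mul_of_nonneg_left hepi.le hn0]
      have hpair := cmx_pair_le_biconj key x₀
      refine le_trans ?_ hpair
      rw [EReal.coe_le_coe_iff, inner_add_left, real_inner_smul_left]
      have hq : (r - ⟪w₀, x₀⟫ + M₀) / d ≤ n := le_max_right _ _
      have hnd : r - ⟪w₀, x₀⟫ + M₀ ≤ n * d := by
        rw [div_le_iff₀ hdpos] at hq
        linarith
      have hux : ⟪u, x₀⟫ = d + s := by rw [real_inner_comm, hddef]; ring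
      rw [hux]
      nlinarith
/-! quadratic sup -/

lemma cmx_quad_le (u z x : K) :
    ⟪x, u⟫ - ‖x - z‖ ^ 2 / 2 ≤ ⟪z, u⟫ + ‖u‖ ^ 2 / 2 := by
  have h0 : (0:ℝ) ≤ ‖x - z - u‖ ^ 2 := sq_nonneg _
  have he : ‖x - z - u‖ ^ 2 = ‖x - z‖ ^ 2 - 2 * ⟪x - z, u⟫ + ‖u‖ ^ 2 :=
    norm_sub_sq_real (x - z) u
  have hi : ⟪x - z, u⟫ = ⟪x, u⟫ - ⟪z, u⟫ := inner_sub_left x z u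
  nlinarith

lemma cmx_sup_quad (u z : K) :
    ⨆ x : K, ((⟪x, u⟫ - ‖x - z‖ ^ 2 / 2 : ℝ) : EReal) = ((⟪z, u⟫ + ‖u‖ ^ 2 / 2 : ℝ) : EReal) := by
  apply le_antisymm
  · exact iSup_le fun x => EReal.coe_le_coe_iff.2 (cmx_quad_le u z x)
  · have h := le_iSup (fun x : K => ((⟪x, u⟫ - ‖x - z‖ ^ 2 / 2 : ℝ) : EReal)) (z + u)
    refine le_trans (le_of_eq ?_) h
    have h1 : z + u - z = u := by abel
    have h2 : ⟪z + u, u⟫ = ⟪z, u⟫ + ⟪u, u⟫ := inner_add_left z u u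
    have h3 : ⟪u, u⟫ = ‖u‖ ^ 2 := real_inner_self_eq_norm_sq u
    simp only [h1, h2, h3]
    norm_cast
    ring

/-! EReal rearrangement lemmas -/

lemma cmx_sub_add_coe (a q : ℝ) {B : EReal} (hB : B ≠ ⊥) :
    (a : EReal) - (B + (q : EReal)) = ((a - q : ℝ) : EReal) + (-B) := by
  induction B using EReal.rec with
  | bot => simp_all
  | coe b =>
    rw [← EReal.coe_neg]
    norm_cast
    ring
  | top =>
    rw [EReal.top_add_coe, EReal.sub_top, EReal.neg_top, EReal.add_bot]

lemma cmx_coe_add_neg (a q : ℝ) {B : EReal} (hB : B ≠ ⊥) :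
    ((a + q : ℝ) : EReal) + (-B) = (((a : ℝ) : EReal) - B) + (q : EReal) := by
  induction B using EReal.rec with
  | bot => simp_all
  | coe b =>
    rw [← EReal.coe_neg]
    norm_cast
    ring
  | top =>
    rw [EReal.neg_top, EReal.add_bot, EReal.sub_top, EReal.bot_add]

/-! conjugate of the Moreau envelope -/

theorem cmx_fconj_menv (f : K → EReal) (hbot : ∀ z, f z ≠ ⊥) (u : K) :
    fconj (menv f) u = fconj f u + QK u := by
  unfold fconj menv QK
  calc ⨆ x : K, ((⟪x, u⟫ : ℝ) : EReal) - ⨅ z : K, (f z + QK (x - z))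
      = ⨆ x : K, ⨆ z : K, (((⟪x, u⟫ : ℝ) : EReal) - (f z + QK (x - z))) :=
        iSup_congr fun x => cmx_coe_sub_iInf _ _
    _ = ⨆ z : K, ⨆ x : K, (((⟪x, u⟫ : ℝ) : EReal) - (f z + QK (x - z))) := iSup_comm
    _ = ⨆ z : K, ⨆ x : K, (((⟪x, u⟫ - ‖x - z‖ ^ 2 / 2 : ℝ) : EReal) + (-f z)) := by
        refine iSup_congr fun z => iSup_congr fun x => ?_
        exact cmx_sub_add_coe _ _ (hbot z)
    _ = ⨆ z : K, ((⨆ x : K, ((⟪x, u⟫ - ‖x - z‖ ^ 2 / 2 : ℝ) : EReal)) + (-f z)) :=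
        iSup_congr fun z => cmx_iSup_coe_add _ _
    _ = ⨆ z : K, (((⟪z, u⟫ + ‖u‖ ^ 2 / 2 : ℝ) : EReal) + (-f z)) := by
        refine iSup_congr fun z => ?_
        rw [cmx_sup_quad]
    _ = ⨆ z : K, ((((⟪z, u⟫ : ℝ) : EReal) - f z) + ((‖u‖ ^ 2 / 2 : ℝ) : EReal)) := by
        refine iSup_congr fun z => ?_
        exact cmx_coe_add_neg _ _ (hbot z)
    _ = (⨆ z : K, (((⟪z, u⟫ : ℝ) : EReal) - f z)) + ((‖u‖ ^ 2 / 2 : ℝ) : EReal) :=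
        (cmx_iSup_add_coe _ _).symm

/-! lower semicontinuity helpers -/

lemma cmx_coe_mul_cancel' {c : ℝ} (hc : c ≠ 0) (a : EReal) :
    (c : EReal) * (((1 / c : ℝ) : EReal) * a) = a := by
  rw [← mul_assoc, ← EReal.coe_mul, mul_one_div_cancel hc, EReal.coe_one, one_mul]

lemma cmx_lsc_coe_mul {α : Type*} [TopologicalSpace α] {c : ℝ} (hc : 0 < c) {f : α → EReal}
    (hf : LowerSemicontinuous f) : LowerSemicontinuous fun x => (c : EReal) * f x := by
  intro x y hy
  have h1 : ((1 / c : ℝ) : EReal) * y < f x := by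
    have h2 := (cmx_mul_lt_mul_iff (c := 1 / c) (by positivity)).2 hy
    rwa [cmx_coe_mul_cancel hc.ne'] at h2
  filter_upwards [hf x _ h1] with x' hx'
  have h3 := (cmx_mul_lt_mul_iff (c := c) hc).2 hx'
  rwa [cmx_coe_mul_cancel' hc.ne'] at h3

lemma cmx_lsc_sum {α : Type*} [TopologicalSpace α] {ι : Type*} (s : Finset ι) (F : ι → α → EReal)
    (hF : ∀ i ∈ s, LowerSemicontinuous (F i)) (hb : ∀ i ∈ s, ∀ x, F i x ≠ ⊥) :
    LowerSemicontinuous fun x => ∑ i ∈ s, F i x := by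
  classical
  induction s using Finset.induction_on with
  | empty => simpa using lowerSemicontinuous_const
  | @insert a s' ha ih =>
    have hsum : LowerSemicontinuous fun x => F a x + ∑ i ∈ s', F i x := by
      refine LowerSemicontinuous.add' (hF a (by simp))
        (ih (fun i hi => hF i (by simp [hi])) (fun i hi => hb i (by simp [hi]))) ?_
      intro x
      refine EReal.continuousAt_add ?_ ?_
      · exact Or.inr (cmx_sum_ne_bot s' _ (fun i hi => hb i (by simp [hi]) x))
      · exact Or.inl (hb a (by simp) x)
    have : (fun x => ∑ i ∈ insert a s', F i x) = fun x => F a x + ∑ i ∈ s', F i x := by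
      funext x
      rw [Finset.sum_insert ha]
    rw [this]
    exact hsum
/-! more sum helpers -/

lemma cmx_sum_ne_top {ι : Type*} (s : Finset ι) (F : ι → EReal) (h : ∀ i ∈ s, F i ≠ ⊤) :
    ∑ i ∈ s, F i ≠ ⊤ := by
  classical
  induction s using Finset.induction_on with
  | empty => simp
  | @insert a s' hi ih =>
    rw [Finset.sum_insert hi]
    exact (EReal.add_lt_top (h a (by simp)) (ih (fun i hi' => h i (by simp [hi'])))).ne

lemma cmx_coe_sum {ι : Type*} (s : Finset ι) (c : ι → ℝ) :
    ∑ i ∈ s, ((c i : ℝ) : EReal) = ((∑ i ∈ s, c i : ℝ) : EReal) := by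
  classical
  induction s using Finset.induction_on with
  | empty => simp
  | @insert a s' hi ih =>
    rw [Finset.sum_insert hi, Finset.sum_insert hi, ih, ← EReal.coe_add]

lemma cmx_coe_mul_ne_top {c : ℝ} (hc : 0 < c) {a : EReal} (ha : a ≠ ⊤) :
    (c : EReal) * a ≠ ⊤ := by
  induction a using EReal.rec with
  | bot => rw [EReal.coe_mul_bot_of_pos hc]; exact bot_ne_top
  | coe t => rw [← EReal.coe_mul]; exact EReal.coe_ne_top _
  | top => simp_all

/-- from a minorant inequality, a lower bound on `f`. -/
lemma cmx_minorant_ge {f : K → EReal} (hbot : ∀ x, f x ≠ ⊥) {w : K} {M : ℝ}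
    (hmin : ∀ z, ((⟪z, w⟫ : ℝ) : EReal) - f z ≤ (M : EReal)) (z : K) :
    ((⟪z, w⟫ - M : ℝ) : EReal) ≤ f z := by
  have h := hmin z
  by_cases htop : f z = ⊤
  · rw [htop]; exact le_top
  · have hfz : f z = ((f z).toReal : EReal) := (EReal.coe_toReal htop (hbot z)).symm
    rw [hfz, ← EReal.coe_sub, EReal.coe_le_coe_iff] at h
    rw [hfz, EReal.coe_le_coe_iff]
    linarith

/-- lower bound for the Moreau envelope from an affine minorant. -/
lemma cmx_menv_lb {f : K → EReal} (hbot : ∀ x, f x ≠ ⊥) {w : K} {M : ℝ}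
    (hmin : ∀ z, ((⟪z, w⟫ : ℝ) : EReal) - f z ≤ (M : EReal)) (y : K) :
    ((⟪y, w⟫ - ‖w‖ ^ 2 / 2 - M : ℝ) : EReal) ≤ menv f y := by
  apply le_iInf
  intro z
  have h1 : ((⟪z, w⟫ - M : ℝ) : EReal) ≤ f z := cmx_minorant_ge hbot hmin z
  have h2 : ((⟪z, w⟫ - M + ‖y - z‖ ^ 2 / 2 : ℝ) : EReal) ≤ f z + QK (y - z) := by
    rw [EReal.coe_add]
    exact add_le_add h1 (le_refl _)
  refine le_trans ?_ h2
  rw [EReal.coe_le_coe_iff]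
  have := cmx_quad_le w z y
  linarith

lemma cmx_menv_ne_bot {f : K → EReal} [CompleteSpace K] (hf : Gamma0 f) (y : K) :
    menv f y ≠ ⊥ := by
  obtain ⟨w, M, hmin⟩ := cmx_exists_minorant hf
  intro h
  have hlb := cmx_menv_lb hf.1.1 hmin y
  rw [h, le_bot_iff] at hlb
  exact EReal.coe_ne_bot _ hlb

lemma cmx_menv_ne_top {f : K → EReal} (hf : ∃ x, f x ≠ ⊤) (hbot : ∀ x, f x ≠ ⊥) (y : K) :
    menv f y ≠ ⊤ := by
  obtain ⟨x₁, hx₁⟩ := hf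
  have hfx : f x₁ = ((f x₁).toReal : EReal) := (EReal.coe_toReal hx₁ (hbot x₁)).symm
  have h1 : menv f y ≤ f x₁ + QK (y - x₁) := iInf_le _ x₁
  rw [hfx] at h1
  have h2 : ((f x₁).toReal : EReal) + QK (y - x₁) < ⊤ := by
    rw [QK, ← EReal.coe_add]
    exact EReal.coe_lt_top _
  exact (h1.trans_lt h2).ne

lemma cmx_le_of_forall_eps {A : EReal} {S : ℝ}
    (h : ∀ ε : ℝ, 0 < ε → A ≤ ((S + ε : ℝ) : EReal)) : A ≤ (S : EReal) := by
  by_contra hlt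
  obtain ⟨r, hr1, hr2⟩ := EReal.lt_iff_exists_real_btwn.1 (not_le.1 hlt)
  have hε : (0:ℝ) < r - S := by
    have := EReal.coe_lt_coe_iff.1 hr1
    linarith
  have := h (r - S) hε
  rw [show S + (r - S) = r by ring] at this
  exact absurd (this.trans_lt hr2) (lt_irrefl _)


variable {H : Type*} [NormedAddCommGroup H] [InnerProductSpace ℝ H]
  {p : ℕ} {G : Fin p → Type*} [∀ k, NormedAddCommGroup (G k)]
  [∀ k, InnerProductSpace ℝ (G k)]

/-- Example 3.3: if the combined operator `L : x ↦ (L_k x)_k` is a coisometry for the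
weighted inner product `((y_k),(v_k)) ↦ ∑_k α_k ⟨y_k, v_k⟩`, i.e. `L ∘ L* = Id` where
`L* : (y_k)_k ↦ ∑_k α_k L_k* y_k`, then the proximal comixture reduces to the standard
composite average. -/
theorem comix_of_coisometry [CompleteSpace H] [∀ k, CompleteSpace (G k)]
    (L : ∀ k, H →L[ℝ] G k) (g : ∀ k, (G k) → EReal) (α : Fin p → ℝ)
    (hg : ∀ k, Gamma0 (g k)) (hL : ∀ k, ‖L k‖ ≤ 1)
    (hα : ∀ k, α k ∈ Set.Ioc (0 : ℝ) 1) (hαsum : ∑ k, α k = 1)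
    (hLL : ∀ (y : ∀ k, G k) (j : Fin p),
      L j (∑ k, α k • (ContinuousLinearMap.adjoint (L k)) (y k)) = y j) :
    comix L g α = fun x => ∑ k, (α k : EReal) * g k (L k x) := by
  classical
  have hαpos : ∀ k, 0 < α k := fun k => (hα k).1
  set ψ : H → EReal := fun x => ∑ k, (α k : EReal) * g k (L k x) with hψdef
  -- ψ is proper
  have hψbot : ∀ x, ψ x ≠ ⊥ := fun x =>
    cmx_sum_ne_bot _ _ fun k _ => cmx_coe_mul_ne_bot (hαpos k) ((hg k).1.1 _)
  choose y₀ hy₀ using fun k => (hg k).1.2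
  have hψtop : ∃ x, ψ x ≠ ⊤ := by
    refine ⟨∑ k, α k • (ContinuousLinearMap.adjoint (L k)) (y₀ k), ?_⟩
    apply cmx_sum_ne_top
    intro k _
    rw [hLL y₀ k]
    exact cmx_coe_mul_ne_top (hαpos k) (hy₀ k)
  -- ψ is lower semicontinuous
  have hψlsc : LowerSemicontinuous ψ := by
    apply cmx_lsc_sum
    · intro k _
      exact cmx_lsc_coe_mul (hαpos k) ((hg k).2.1.comp (L k).continuous)
    · intro k _ x
      exact cmx_coe_mul_ne_bot (hαpos k) ((hg k).1.1 _)
  -- ψ is convex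
  have hψconv : ConvexFnE ψ := by
    intro x y a b ha hb hab
    rcases eq_or_lt_of_le ha with ha0 | hapos
    · have hb1 : b = 1 := by linarith
      subst hb1
      rw [← ha0]
      simp
    · rcases eq_or_lt_of_le hb with hb0 | hbpos
      · have ha1 : a = 1 := by linarith
        subst ha1
        rw [← hb0]
        simp
      · calc ψ (a • x + b • y) = ∑ k, (α k : EReal) * g k (a • L k x + b • L k y) := by
              refine Finset.sum_congr rfl fun k _ => ?_
              rw [map_add, map_smul, map_smul]
          _ ≤ ∑ k, (α k : EReal) * ((a : EReal) * g k (L k x) + (b : EReal) * g k (L k y)) :=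
              Finset.sum_le_sum fun k _ =>
                cmx_mul_le_mul (hαpos k).le ((hg k).2.2 _ _ a b ha hb hab)
          _ = ∑ k, ((a : EReal) * ((α k : EReal) * g k (L k x))
                + (b : EReal) * ((α k : EReal) * g k (L k y))) := by
              refine Finset.sum_congr rfl fun k _ => ?_
              rw [cmx_coe_mul_add (hαpos k), mul_left_comm ((α k : EReal)) ((a : EReal)),
                mul_left_comm ((α k : EReal)) ((b : EReal))]
          _ = (a : EReal) * ψ x + (b : EReal) * ψ y := by
              rw [Finset.sum_add_distrib, ← cmx_coe_mul_sum hapos, ← cmx_coe_mul_sum hbpos]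
  have hΓ : Gamma0 ψ := ⟨⟨hψbot, hψtop⟩, hψlsc, hψconv⟩
  -- norm identity for the coisometry
  have hnorm : ∀ y : ∀ k, G k,
      ‖∑ k, α k • (ContinuousLinearMap.adjoint (L k)) (y k)‖ ^ 2 = ∑ k, α k * ‖y k‖ ^ 2 := by
    intro y
    have h1 : ‖∑ k, α k • (ContinuousLinearMap.adjoint (L k)) (y k)‖ ^ 2
        = ⟪∑ k, α k • (ContinuousLinearMap.adjoint (L k)) (y k),
            ∑ k, α k • (ContinuousLinearMap.adjoint (L k)) (y k)⟫ :=
      (real_inner_self_eq_norm_sq _).symm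
    rw [h1, sum_inner]
    refine Finset.sum_congr rfl fun k _ => ?_
    rw [real_inner_smul_left, ContinuousLinearMap.adjoint_inner_left, hLL y k,
      real_inner_self_eq_norm_sq]
  -- operator norm bound
  have hLv : ∀ (v : H) (k : Fin p), ‖L k v‖ ^ 2 ≤ ‖v‖ ^ 2 := by
    intro v k
    have h1 : ‖L k v‖ ≤ ‖v‖ := by
      calc ‖L k v‖ ≤ ‖L k‖ * ‖v‖ := (L k).le_opNorm v
        _ ≤ 1 * ‖v‖ := mul_le_mul_of_nonneg_right (hL k) (norm_nonneg v)
        _ = ‖v‖ := one_mul _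
    exact pow_le_pow_left₀ (norm_nonneg _) h1 2
  -- key identity : the weighted sum of Moreau envelopes is the envelope of ψ
  have hmenv : (fun x : H => ∑ k, (α k : EReal) * menv (g k) (L k x)) = menv ψ := by
    funext x
    apply le_antisymm
    · apply le_iInf
      intro z
      have h2 : (∑ k, (α k : EReal) * menv (g k) (L k x))
          ≤ ∑ k, (α k : EReal) * (g k (L k z) + QK (L k x - L k z)) :=
        Finset.sum_le_sum fun k _ => cmx_mul_le_mul (hαpos k).le (iInf_le _ (L k z))
      refine h2.trans ?_
      have h3 : ∀ k, (α k : EReal) * (g k (L k z) + QK (L k x - L k z))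
          = (α k : EReal) * g k (L k z) + ((α k * (‖L k (x - z)‖ ^ 2 / 2) : ℝ) : EReal) := by
        intro k
        rw [cmx_coe_mul_add (hαpos k)]
        simp only [QK]
        rw [← EReal.coe_mul, ← map_sub]
      calc ∑ k, (α k : EReal) * (g k (L k z) + QK (L k x - L k z))
          = ψ z + ((∑ k, α k * (‖L k (x - z)‖ ^ 2 / 2) : ℝ) : EReal) := by
            rw [Finset.sum_congr rfl fun k _ => h3 k, Finset.sum_add_distrib, cmx_coe_sum]
        _ ≤ ψ z + QK (x - z) := by
            refine add_le_add_right ?_ _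
            simp only [QK]
            rw [EReal.coe_le_coe_iff]
            calc ∑ k, α k * (‖L k (x - z)‖ ^ 2 / 2) ≤ ∑ k, α k * (‖x - z‖ ^ 2 / 2) :=
                  Finset.sum_le_sum fun k _ => mul_le_mul_of_nonneg_left
                    (by linarith [hLv (x - z) k]) (hαpos k).le
              _ = ‖x - z‖ ^ 2 / 2 := by rw [← Finset.sum_mul, hαsum, one_mul]
    · set μ : Fin p → ℝ := fun k => (menv (g k) (L k x)).toReal with hμ
      have hμeq : ∀ k, menv (g k) (L k x) = ((μ k : ℝ) : EReal) := fun k =>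
        (EReal.coe_toReal (cmx_menv_ne_top (hg k).1.2 (hg k).1.1 _)
          (cmx_menv_ne_bot (hg k) _)).symm
      have hsum : (∑ k, (α k : EReal) * menv (g k) (L k x))
          = ((∑ k, α k * μ k : ℝ) : EReal) := by
        rw [Finset.sum_congr rfl fun k _ => by rw [hμeq k, ← EReal.coe_mul], cmx_coe_sum]
      rw [hsum]
      apply cmx_le_of_forall_eps
      intro ε hε
      have hlt : ∀ k, ∃ z : G k, g k z + QK (L k x - z) < ((μ k + ε : ℝ) : EReal) := by
        intro k
        have h := hμeq k
        unfold menv at h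
        have h2 : ⨅ z : G k, (g k z + QK (L k x - z)) < ((μ k + ε : ℝ) : EReal) := by
          rw [h]
          exact_mod_cast (by linarith : μ k < μ k + ε)
        exact iInf_lt_iff.1 h2
      choose zc hzc using hlt
      have htk : ∀ k, g k (zc k) = (((g k (zc k)).toReal : ℝ) : EReal) := by
        intro k
        refine (EReal.coe_toReal ?_ ((hg k).1.1 _)).symm
        intro habs
        have h := hzc k
        rw [habs] at h
        simp only [QK] at h
        rw [EReal.top_add_coe] at h
        exact absurd h (by simp)
      set t : Fin p → ℝ := fun k => (g k (zc k)).toReal with htdef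
      have hreal : ∀ k, t k + ‖L k x - zc k‖ ^ 2 / 2 < μ k + ε := by
        intro k
        have h := hzc k
        rw [htk k] at h
        simp only [QK] at h
        rw [← EReal.coe_add, EReal.coe_lt_coe_iff] at h
        exact h
      set y : ∀ k, G k := fun k => zc k - L k x with hy
      set w : H := ∑ k, α k • (ContinuousLinearMap.adjoint (L k)) (y k) with hw
      have hLz : ∀ k, L k (x + w) = zc k := by
        intro k
        rw [map_add, hw, hLL y k]
        show L k x + (zc k - L k x) = zc k
        abel
      have hQ : QK (x - (x + w)) = ((∑ k, α k * (‖y k‖ ^ 2 / 2) : ℝ) : EReal) := by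
        have hxz : x - (x + w) = -w := by abel
        simp only [QK]
        rw [hxz, norm_neg, hw, hnorm y]
        congr 2
        rw [Finset.sum_div]
        exact Finset.sum_congr rfl fun k _ => by ring
      have hψz : ψ (x + w) = ((∑ k, α k * t k : ℝ) : EReal) := by
        have h5 : ∀ k, (α k : EReal) * g k (L k (x + w)) = ((α k * t k : ℝ) : EReal) := by
          intro k
          rw [hLz k, htk k, ← EReal.coe_mul]
        calc ψ (x + w) = ∑ k, (α k : EReal) * g k (L k (x + w)) := rfl
          _ = ∑ k, ((α k * t k : ℝ) : EReal) := Finset.sum_congr rfl fun k _ => h5 k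
          _ = ((∑ k, α k * t k : ℝ) : EReal) := cmx_coe_sum _ _
      have hfinal : menv ψ x ≤ ψ (x + w) + QK (x - (x + w)) := iInf_le _ (x + w)
      refine le_trans hfinal ?_
      rw [hψz, hQ, ← EReal.coe_add, EReal.coe_le_coe_iff]
      calc ∑ k, α k * t k + ∑ k, α k * (‖y k‖ ^ 2 / 2)
          = ∑ k, α k * (t k + ‖y k‖ ^ 2 / 2) := by
            rw [← Finset.sum_add_distrib]
            exact Finset.sum_congr rfl fun k _ => by ring
        _ ≤ ∑ k, α k * (μ k + ε) := by
            refine Finset.sum_le_sum fun k _ => mul_le_mul_of_nonneg_left ?_ (hαpos k).le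
            have h6 := hreal k
            have h7 : y k = zc k - L k x := rfl
            rw [h7]
            have h8 : ‖zc k - L k x‖ = ‖L k x - zc k‖ := norm_sub_rev _ _
            rw [h8]
            linarith
        _ = (∑ k, α k * μ k) + ε := by
            rw [Finset.sum_congr rfl fun k _ => mul_add (α k) (μ k) ε,
              Finset.sum_add_distrib, ← Finset.sum_mul, hαsum, one_mul]
  -- conclusion via biconjugation
  have hfun : (fun u => fconj (fun x => ∑ k, (α k : EReal) * menv (g k) (L k x)) u - QK u)
      = fconj ψ := by
    funext u
    rw [hmenv, cmx_fconj_menv ψ hψbot u]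
    simp only [QK]
    rw [EReal.add_sub_cancel_right]
  unfold comix
  rw [hfun, cmx_biconj hΓ]

end
end

section
/- Douglas–Rachford algorithm for the comixture problem: let f ∈ Γ₀(H), set h = comix(L_k,g_k)_{1≤k≤p}, and suppose that 0 ∈ range(∂f + ∂h). Let (λ_n)_{n∈ℕ} be a sequence in (0,2) such that ∑_{n∈ℕ} λ_n(2−λ_n) = +∞, let y₀ ∈ H, and iterate for n = 0,1,…: x_n = y_n + ∑_{k=1}^p α_k L_k*(prox_{g_k}(L_k y_n) − L_k y_n); z_n = prox_f(2x_n − y_n); y_{n+1} = y_n + λ_n(z_n − x_n). Then (x_n)_{n∈ℕ} converges weakly to a minimizer of f + h over H. -/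
open scoped RealInnerProductSpace
open Filter

noncomputable section

variable {K : Type*} [NormedAddCommGroup K] [InnerProductSpace ℝ K]

variable {H : Type*} [NormedAddCommGroup H] [InnerProductSpace ℝ H]
  {p : ℕ} {G : Fin p → Type*} [∀ k, NormedAddCommGroup (G k)]
  [∀ k, InnerProductSpace ℝ (G k)]

section Sec1
variable {K : Type*} [NormedAddCommGroup K] [InnerProductSpace ℝ K]

lemma ereal_exists_real (e : EReal) (h1 : e ≠ ⊤) (h2 : e ≠ ⊥) : ∃ r : ℝ, e = (r : EReal) :=
  ⟨e.toReal, (EReal.coe_toReal h1 h2).symm⟩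

lemma subdiff_finite {g : K → EReal} (hg : Gamma0 g) {x u : K} (hu : u ∈ subdiff g x) :
    ∃ r : ℝ, g x = (r : EReal) := by
  obtain ⟨⟨hbot, z0, hz0⟩, -, -⟩ := hg
  refine ereal_exists_real _ ?_ (hbot x)
  intro htop
  have h := hu z0
  rw [htop] at h
  have : ((⟪z0 - x, u⟫ : ℝ) : EReal) + ⊤ = ⊤ := by
    simp [EReal.add_top_iff_ne_bot]
  rw [this] at h
  exact hz0 (top_le_iff.1 h)

lemma prox_val_finite {g : K → EReal} {P : K → K} (hg : Gamma0 g) (hP : IsProx g P) (x : K) :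
    ∃ r : ℝ, g (P x) = (r : EReal) := by
  obtain ⟨⟨hbot, z0, hz0⟩, -, -⟩ := hg
  refine ereal_exists_real _ ?_ (hbot (P x))
  intro htop
  have h := (hP x).1 z0
  rw [htop] at h
  obtain ⟨r0, hr0⟩ := ereal_exists_real (g z0) hz0 (hbot z0)
  rw [hr0] at h
  have hlt : (r0 : EReal) + QK (x - z0) < ⊤ := by
    simp only [QK]
    rw [← EReal.coe_add]
    exact EReal.coe_lt_top _
  have : (⊤ : EReal) + QK (x - P x) = ⊤ := by
    simp [QK, EReal.top_add_iff_ne_bot]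
  rw [this] at h
  exact hlt.ne (top_le_iff.1 h)

lemma prox_subdiff {g : K → EReal} {P : K → K} (hg : Gamma0 g) (hP : IsProx g P) (x : K) :
    (x - P x) ∈ subdiff g (P x) := by
  obtain ⟨r0, hr0⟩ := prox_val_finite hg hP x
  obtain ⟨⟨hbot, z0, hz0⟩, -, hconv⟩ := hg
  intro z
  by_cases hzt : g z = ⊤
  · rw [hzt]; exact le_top
  obtain ⟨rz, hrz⟩ := ereal_exists_real (g z) hzt (hbot z)
  rw [hr0, hrz, ← EReal.coe_add, EReal.coe_le_coe_iff]
  set q := x - P x with hq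
  set d := z - P x with hd
  have key : ∀ t : ℝ, 0 < t → t < 1 → ⟪q, d⟫ ≤ rz - r0 + t * (‖d‖^2/2) := by
    intro t ht0 ht1
    set w := P x + t • d with hw
    have hwco : w = (1-t) • (P x) + t • z := by
      rw [hw, hd]; module
    have hcv := hconv (P x) z (1-t) t (by linarith) (by linarith) (by ring)
    rw [← hwco, hr0, hrz] at hcv
    have hgw_ub : g w ≤ (((1-t)*r0 + t*rz : ℝ) : EReal) := by
      refine hcv.trans_eq ?_
      push_cast
      rfl
    obtain ⟨rw', hrw⟩ := ereal_exists_real (g w)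
      (fun h => by rw [h] at hgw_ub; exact EReal.coe_ne_top _ (top_le_iff.1 hgw_ub)) (hbot w)
    have hmin := (hP x).1 w
    rw [hr0, hrw] at hmin
    simp only [QK, ← EReal.coe_add, EReal.coe_le_coe_iff] at hmin
    rw [hrw] at hgw_ub
    rw [EReal.coe_le_coe_iff] at hgw_ub
    have hxw : x - w = q - t • d := by rw [hw, hq]; module
    have hnorm : ‖x - w‖^2 = ‖q‖^2 - 2*(t*⟪q,d⟫) + t^2*‖d‖^2 := by
      rw [hxw, @norm_sub_sq_real, real_inner_smul_right, norm_smul]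
      simp [mul_pow, sq_abs]
      try ring
    rw [hnorm] at hmin
    nlinarith
  have hfinal : ⟪q, d⟫ ≤ rz - r0 := by
    refine le_of_forall_pos_le_add (fun ε hε => ?_)
    set t := min (1/2 : ℝ) (ε / (‖d‖^2/2 + 1)) with ht
    have hden : (0:ℝ) < ‖d‖^2/2 + 1 := by positivity
    have ht0 : 0 < t := lt_min (by norm_num) (by positivity)
    have ht1 : t < 1 := lt_of_le_of_lt (min_le_left _ _) (by norm_num)
    have := key t ht0 ht1
    have htb : t * (‖d‖^2/2) ≤ ε := by
      have h1 : t ≤ ε / (‖d‖^2/2 + 1) := min_le_right _ _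
      have h2 : t * (‖d‖^2/2) ≤ (ε / (‖d‖^2/2 + 1)) * (‖d‖^2/2) :=
        mul_le_mul_of_nonneg_right h1 (by positivity)
      refine h2.trans ?_
      rw [div_mul_eq_mul_div, div_le_iff₀ hden]
      nlinarith [hε.le, sq_nonneg ‖d‖]
    linarith
  have hcomm := real_inner_comm q d
  linarith [hfinal]

lemma subdiff_to_prox {g : K → EReal} {P : K → K} (hg : Gamma0 g) (hP : IsProx g P)
    {x u : K} (hu : u ∈ subdiff g x) : P (x + u) = x := by
  obtain ⟨r, hr⟩ := subdiff_finite hg hu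
  obtain ⟨⟨hbot, -⟩, -, -⟩ := hg
  refine ((hP (x + u)).2 x (fun w => ?_)).symm
  by_cases hwt : g w = ⊤
  · rw [hwt]
    have : (⊤:EReal) + QK (x + u - w) = ⊤ := by simp [QK, EReal.top_add_iff_ne_bot]
    rw [this]; exact le_top
  obtain ⟨rw', hrw⟩ := ereal_exists_real (g w) hwt (hbot w)
  have hsub := hu w
  rw [hr, hrw, ← EReal.coe_add, EReal.coe_le_coe_iff] at hsub
  rw [hr, hrw]
  simp only [QK, ← EReal.coe_add, EReal.coe_le_coe_iff]
  have hexp : ‖x + u - w‖^2 = ‖x - w‖^2 + 2*⟪x - w, u⟫ + ‖u‖^2 := by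
    have : x + u - w = (x - w) + u := by abel
    rw [this, @norm_add_sq_real]
  have hiden : ⟪w - x, u⟫ = - ⟪x - w, u⟫ := by
    rw [← inner_neg_left]; congr 1; abel
  rw [hiden] at hsub
  have hxx : x + u - x = u := by abel
  rw [hxx, hexp]
  nlinarith [sq_nonneg ‖x - w‖]

lemma subdiff_mono {g : K → EReal} (hg : Gamma0 g) {t1 t2 u1 u2 : K}
    (h1 : u1 ∈ subdiff g t1) (h2 : u2 ∈ subdiff g t2) :
    0 ≤ ⟪t1 - t2, u1 - u2⟫ := by
  obtain ⟨r1, hr1⟩ := subdiff_finite hg h1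
  obtain ⟨r2, hr2⟩ := subdiff_finite hg h2
  have ha := h1 t2
  have hb := h2 t1
  rw [hr1, hr2, ← EReal.coe_add, EReal.coe_le_coe_iff] at ha
  rw [hr1, hr2, ← EReal.coe_add, EReal.coe_le_coe_iff] at hb
  have hsw : ⟪t1 - t2, u1 - u2⟫ = - ⟪t2 - t1, u1⟫ - ⟪t1 - t2, u2⟫ := by
    rw [inner_sub_right]
    have : (⟪t1 - t2, u1⟫) = - ⟪t2 - t1, u1⟫ := by
      rw [← inner_neg_left]; congr 1; abel
    rw [this]; try ring
  rw [hsw]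
  linarith

end Sec1
section Sec2
variable {K : Type*} [NormedAddCommGroup K] [InnerProductSpace ℝ K]

lemma ereal_coe_sum {ι : Type*} (s : Finset ι) (f : ι → ℝ) :
    ((∑ i ∈ s, f i : ℝ) : EReal) = ∑ i ∈ s, ((f i : ℝ) : EReal) := by
  classical
  induction s using Finset.induction with
  | empty => simp
  | insert a s' h ih => simp [Finset.sum_insert h, ← ih, ← EReal.coe_add]

lemma subdiff_finite' {g : K → EReal} (hbot : ∀ x, g x ≠ ⊥) {z0 : K} (hz0 : g z0 ≠ ⊤)
    {x u : K} (hu : u ∈ subdiff g x) : ∃ r : ℝ, g x = (r : EReal) := by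
  refine ereal_exists_real _ ?_ (hbot x)
  intro htop
  have h := hu z0
  rw [htop] at h
  have : ((⟪z0 - x, u⟫ : ℝ) : EReal) + ⊤ = ⊤ := by
    simp [EReal.add_top_iff_ne_bot]
  rw [this] at h
  exact hz0 (top_le_iff.1 h)

lemma subdiff_mono' {g : K → EReal} (hbot : ∀ x, g x ≠ ⊥) {z0 : K} (hz0 : g z0 ≠ ⊤)
    {t1 t2 u1 u2 : K} (h1 : u1 ∈ subdiff g t1) (h2 : u2 ∈ subdiff g t2) :
    0 ≤ ⟪t1 - t2, u1 - u2⟫ := by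
  obtain ⟨r1, hr1⟩ := subdiff_finite' hbot hz0 h1
  obtain ⟨r2, hr2⟩ := subdiff_finite' hbot hz0 h2
  have ha := h1 t2
  have hb := h2 t1
  rw [hr1, hr2, ← EReal.coe_add, EReal.coe_le_coe_iff] at ha
  rw [hr1, hr2, ← EReal.coe_add, EReal.coe_le_coe_iff] at hb
  have hsw : ⟪t1 - t2, u1 - u2⟫ = - ⟪t2 - t1, u1⟫ - ⟪t1 - t2, u2⟫ := by
    rw [inner_sub_right]
    have : (⟪t1 - t2, u1⟫) = - ⟪t2 - t1, u1⟫ := by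
      rw [← inner_neg_left]; congr 1; abel
    rw [this]; try ring
  rw [hsw]
  linarith

/-- The Moreau envelope value formula. -/
lemma menv_eq {g : K → EReal} {P : K → K} (hg : Gamma0 g) (hP : IsProx g P) (u : K) :
    menv g u = (((g (P u)).toReal + ‖u - P u‖^2/2 : ℝ) : EReal) := by
  obtain ⟨r, hr⟩ := prox_val_finite hg hP u
  have hrt : (g (P u)).toReal = r := by rw [hr]; simp
  rw [hrt]
  refine le_antisymm ?_ ?_
  · refine (iInf_le _ (P u)).trans_eq ?_
    rw [hr]
    simp only [QK, ← EReal.coe_add]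
  · refine le_iInf fun z => ?_
    have := (hP u).1 z
    rw [hr] at this
    refine le_trans (le_of_eq ?_) this
    simp only [QK, ← EReal.coe_add]

lemma menv_grad_ineq {g : K → EReal} {P : K → K} (hg : Gamma0 g) (hP : IsProx g P) (u u' : K) :
    (g (P u)).toReal + ‖u - P u‖^2/2 + ⟪u - P u, u' - u⟫
      ≤ (g (P u')).toReal + ‖u' - P u'‖^2/2 := by
  obtain ⟨r, hr⟩ := prox_val_finite hg hP u
  obtain ⟨r', hr'⟩ := prox_val_finite hg hP u'
  have hrt : (g (P u)).toReal = r := by rw [hr]; simp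
  have hrt' : (g (P u')).toReal = r' := by rw [hr']; simp
  rw [hrt, hrt']
  have hsub := prox_subdiff hg hP u (P u')
  rw [hr, hr', ← EReal.coe_add, EReal.coe_le_coe_iff] at hsub
  set q := u - P u with hq
  set s := u' - P u' with hs
  have hdec : u' - u = (s - q) + (P u' - P u) := by rw [hs, hq]; module
  have hinner : ⟪q, u' - u⟫ = ⟪q, s⟫ - ‖q‖^2 + ⟪q, P u' - P u⟫ := by
    rw [hdec, inner_add_right, inner_sub_right, real_inner_self_eq_norm_sq]
  have hcomm : ⟪P u' - P u, q⟫ = ⟪q, P u' - P u⟫ := real_inner_comm _ _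
  have hqs : ‖q - s‖^2 = ‖q‖^2 - 2*⟪q,s⟫ + ‖s‖^2 := by
    rw [@norm_sub_sq_real]; try ring
  nlinarith [sq_nonneg ‖q - s‖]

lemma menv_descent {g : K → EReal} {P : K → K} (hg : Gamma0 g) (hP : IsProx g P) (u e : K) :
    (g (P (u+e))).toReal + ‖(u+e) - P (u+e)‖^2/2
      ≤ (g (P u)).toReal + ‖u - P u‖^2/2 + ⟪u - P u, e⟫ + ‖e‖^2/2 := by
  obtain ⟨r, hr⟩ := prox_val_finite hg hP u
  obtain ⟨r', hr'⟩ := prox_val_finite hg hP (u+e)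
  have hrt : (g (P u)).toReal = r := by rw [hr]; simp
  have hrt' : (g (P (u+e))).toReal = r' := by rw [hr']; simp
  rw [hrt, hrt']
  have hmin := (hP (u+e)).1 (P u)
  rw [hr, hr'] at hmin
  simp only [QK, ← EReal.coe_add, EReal.coe_le_coe_iff] at hmin
  have hid : u + e - P u = (u - P u) + e := by abel
  rw [hid, @norm_add_sq_real] at hmin
  linarith
end Sec2
section Sec3
variable {H : Type*} [NormedAddCommGroup H] [InnerProductSpace ℝ H] [CompleteSpace H]
  {p : ℕ} {G : Fin p → Type*} [∀ k, NormedAddCommGroup (G k)]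
  [∀ k, InnerProductSpace ℝ (G k)] [∀ k, CompleteSpace (G k)]

/-- Candidate proximity operator of the comixture. -/
def QopMap (L : ∀ k, H →L[ℝ] G k) (α : Fin p → ℝ) (P : ∀ k, G k → G k) (w : H) : H :=
  w + ∑ k, α k • (ContinuousLinearMap.adjoint (L k)) (P k (L k w) - L k w)

/-- Real-valued version of the weighted sum of Moreau envelopes. -/
def mRfun (L : ∀ k, H →L[ℝ] G k) (g : ∀ k, (G k) → EReal) (α : Fin p → ℝ)
    (P : ∀ k, G k → G k) (x : H) : ℝ :=
  ∑ k, α k * ((g k (P k (L k x))).toReal + ‖L k x - P k (L k x)‖^2/2)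

variable {L : ∀ k, H →L[ℝ] G k} {g : ∀ k, (G k) → EReal} {α : Fin p → ℝ} {P : ∀ k, G k → G k}

lemma m_coe (hg : ∀ k, Gamma0 (g k)) (hP : ∀ k, IsProx (g k) (P k)) (x : H) :
    (∑ k, (α k : EReal) * menv (g k) (L k x)) = ((mRfun L g α P x : ℝ) : EReal) := by
  rw [mRfun, ereal_coe_sum]
  refine Finset.sum_congr rfl fun k _ => ?_
  rw [menv_eq (hg k) (hP k), ← EReal.coe_mul]

lemma Qop_sub (L : ∀ k, H →L[ℝ] G k) (α : Fin p → ℝ) (P : ∀ k, G k → G k) (w : H) :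
    w - QopMap L α P w
      = ∑ k, α k • (ContinuousLinearMap.adjoint (L k)) (L k w - P k (L k w)) := by
  rw [QopMap]
  have h1 : w - (w + ∑ k, α k • (ContinuousLinearMap.adjoint (L k)) (P k (L k w) - L k w))
      = -∑ k, α k • (ContinuousLinearMap.adjoint (L k)) (P k (L k w) - L k w) := by abel
  rw [h1, ← Finset.sum_neg_distrib]
  refine Finset.sum_congr rfl fun k _ => ?_
  rw [← smul_neg, ← map_neg, neg_sub]

lemma inner_vvec (L : ∀ k, H →L[ℝ] G k) (α : Fin p → ℝ) (P : ∀ k, G k → G k) (w d : H) :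
    ⟪w - QopMap L α P w, d⟫ = ∑ k, α k * ⟪L k w - P k (L k w), L k d⟫ := by
  rw [Qop_sub, sum_inner]
  refine Finset.sum_congr rfl fun k _ => ?_
  rw [real_inner_smul_left, ContinuousLinearMap.adjoint_inner_left]

lemma mA1 (hg : ∀ k, Gamma0 (g k)) (hP : ∀ k, IsProx (g k) (P k))
    (hα : ∀ k, α k ∈ Set.Ioc (0 : ℝ) 1) (w x' : H) :
    mRfun L g α P w + ⟪w - QopMap L α P w, x' - w⟫ ≤ mRfun L g α P x' := by
  rw [inner_vvec, mRfun, mRfun, ← Finset.sum_add_distrib]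
  refine Finset.sum_le_sum fun k _ => ?_
  rw [← mul_add]
  refine mul_le_mul_of_nonneg_left ?_ (hα k).1.le
  have := menv_grad_ineq (hg k) (hP k) (L k w) (L k x')
  have hmap : L k x' - L k w = L k (x' - w) := (map_sub (L k) x' w).symm
  rw [hmap] at this
  linarith

lemma mDesc (hg : ∀ k, Gamma0 (g k)) (hP : ∀ k, IsProx (g k) (P k))
    (hα : ∀ k, α k ∈ Set.Ioc (0 : ℝ) 1) (hαsum : ∑ k, α k = 1) (hL : ∀ k, ‖L k‖ ≤ 1)
    (w d : H) :
    mRfun L g α P (w + d)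
      ≤ mRfun L g α P w + ⟪w - QopMap L α P w, d⟫ + ‖d‖^2/2 := by
  rw [inner_vvec, mRfun, mRfun]
  have step : ∀ k : Fin p,
      α k * ((g k (P k (L k (w+d)))).toReal + ‖L k (w+d) - P k (L k (w+d))‖^2/2)
        ≤ α k * ((g k (P k (L k w))).toReal + ‖L k w - P k (L k w)‖^2/2
            + ⟪L k w - P k (L k w), L k d⟫) + α k * (‖d‖^2/2) := by
    intro k
    rw [← mul_add]
    refine mul_le_mul_of_nonneg_left ?_ (hα k).1.le
    have h1 := menv_descent (hg k) (hP k) (L k w) (L k d)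
    have hmap : L k (w + d) = L k w + L k d := map_add (L k) w d
    rw [← hmap] at h1
    have h2 : ‖L k d‖^2 ≤ ‖d‖^2 := by
      have h3 : ‖L k d‖ ≤ ‖d‖ := by
        have := (L k).le_opNorm d
        nlinarith [hL k, norm_nonneg d, norm_nonneg (L k d), (L k).opNorm_nonneg]
      nlinarith [norm_nonneg (L k d)]
    linarith
  calc ∑ k, α k * ((g k (P k (L k (w+d)))).toReal + ‖L k (w+d) - P k (L k (w+d))‖^2/2)
      ≤ ∑ k, (α k * ((g k (P k (L k w))).toReal + ‖L k w - P k (L k w)‖^2/2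
            + ⟪L k w - P k (L k w), L k d⟫) + α k * (‖d‖^2/2)) :=
        Finset.sum_le_sum fun k _ => step k
    _ = ∑ k, α k * ((g k (P k (L k w))).toReal + ‖L k w - P k (L k w)‖^2/2)
          + ∑ k, α k * ⟪L k w - P k (L k w), L k d⟫ + ∑ k, α k * (‖d‖^2/2) := by
        rw [Finset.sum_add_distrib]
        congr 1
        rw [← Finset.sum_add_distrib]
        exact Finset.sum_congr rfl fun k _ => by ring
    _ ≤ _ := by
        have : ∑ k, α k * (‖d‖^2/2) = ‖d‖^2/2 := by
          rw [← Finset.sum_mul, hαsum, one_mul]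
        rw [this]
end Sec3
section Sec4
variable {H : Type*} [NormedAddCommGroup H] [InnerProductSpace ℝ H] [CompleteSpace H]
  {p : ℕ} {G : Fin p → Type*} [∀ k, NormedAddCommGroup (G k)]
  [∀ k, InnerProductSpace ℝ (G k)] [∀ k, CompleteSpace (G k)]
  {L : ∀ k, H →L[ℝ] G k} {g : ∀ k, (G k) → EReal} {α : Fin p → ℝ} {P : ∀ k, G k → G k}

lemma fconj_m_eq (hg : ∀ k, Gamma0 (g k)) (hP : ∀ k, IsProx (g k) (P k))
    (hα : ∀ k, α k ∈ Set.Ioc (0 : ℝ) 1) (w : H) :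
    fconj (fun x => ∑ k, (α k : EReal) * menv (g k) (L k x)) (w - QopMap L α P w)
      = ((⟪w, w - QopMap L α P w⟫ - mRfun L g α P w : ℝ) : EReal) := by
  rw [fconj]
  refine le_antisymm (iSup_le fun x => ?_) (le_iSup_of_le w ?_)
  · simp only [m_coe hg hP, ← EReal.coe_sub, EReal.coe_le_coe_iff]
    have h1 := mA1 (L := L) hg hP hα w x
    have h2 : ⟪x, w - QopMap L α P w⟫ - ⟪w, w - QopMap L α P w⟫
        = ⟪w - QopMap L α P w, x - w⟫ := by
      rw [← @inner_sub_left, real_inner_comm]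
    linarith
  · simp only [m_coe hg hP, ← EReal.coe_sub]
    exact le_rfl

lemma phi_lb (hg : ∀ k, Gamma0 (g k)) (hP : ∀ k, IsProx (g k) (P k)) (v' x₀ : H) :
    ((⟪x₀, v'⟫ - mRfun L g α P x₀ - ‖v'‖^2/2 : ℝ) : EReal)
      ≤ fconj (fun x => ∑ k, (α k : EReal) * menv (g k) (L k x)) v' - QK v' := by
  have h1 : ((⟪x₀, v'⟫ - mRfun L g α P x₀ : ℝ) : EReal)
      ≤ fconj (fun x => ∑ k, (α k : EReal) * menv (g k) (L k x)) v' :=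
    le_iSup_of_le x₀ (by simp only [m_coe hg hP, ← EReal.coe_sub]; exact le_rfl)
  have h2 := EReal.sub_le_sub h1 (le_refl (QK v'))
  refine le_trans (le_of_eq ?_) h2
  rw [QK, ← EReal.coe_sub]

lemma phiv_eq (hg : ∀ k, Gamma0 (g k)) (hP : ∀ k, IsProx (g k) (P k))
    (hα : ∀ k, α k ∈ Set.Ioc (0 : ℝ) 1) (w : H) :
    fconj (fun x => ∑ k, (α k : EReal) * menv (g k) (L k x)) (w - QopMap L α P w)
        - QK (w - QopMap L α P w)
      = ((⟪w, w - QopMap L α P w⟫ - mRfun L g α P w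
          - ‖w - QopMap L α P w‖^2/2 : ℝ) : EReal) := by
  rw [fconj_m_eq hg hP hα, QK, ← EReal.coe_sub]

lemma phi_subgrad (hg : ∀ k, Gamma0 (g k)) (hP : ∀ k, IsProx (g k) (P k))
    (hα : ∀ k, α k ∈ Set.Ioc (0 : ℝ) 1) (hαsum : ∑ k, α k = 1) (hL : ∀ k, ‖L k‖ ≤ 1)
    (w v' : H) :
    (((⟪w, w - QopMap L α P w⟫ - mRfun L g α P w - ‖w - QopMap L α P w‖^2/2)
        + ⟪QopMap L α P w, v' - (w - QopMap L α P w)⟫ : ℝ) : EReal)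
      ≤ fconj (fun x => ∑ k, (α k : EReal) * menv (g k) (L k x)) v' - QK v' := by
  refine le_trans ?_ (phi_lb hg hP v' (w + (v' - (w - QopMap L α P w))))
  rw [EReal.coe_le_coe_iff]
  have hd := mDesc hg hP hα hαsum hL w (v' - (w - QopMap L α P w))
  have h1 : ⟪w + (v' - (w - QopMap L α P w)), v'⟫
      = ⟪w, v'⟫ + ⟪v' - (w - QopMap L α P w), v'⟫ := by rw [@inner_add_left]
  have h2 : ⟪v' - (w - QopMap L α P w), v'⟫
      = ⟪v', v'⟫ - ⟪w - QopMap L α P w, v'⟫ := by rw [@inner_sub_left]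
  have h3 : ⟪QopMap L α P w, v' - (w - QopMap L α P w)⟫
      = ⟪QopMap L α P w, v'⟫ - ⟪QopMap L α P w, w - QopMap L α P w⟫ := by
    rw [@inner_sub_right]
  have h4 : ⟪w - QopMap L α P w, v' - (w - QopMap L α P w)⟫
      = ⟪w - QopMap L α P w, v'⟫ - ⟪w - QopMap L α P w, w - QopMap L α P w⟫ := by
    rw [@inner_sub_right]
  have h5 : ‖v' - (w - QopMap L α P w)‖^2
      = ‖v'‖^2 - 2*⟪w - QopMap L α P w, v'⟫ + ‖w - QopMap L α P w‖^2 := by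
    rw [@norm_sub_sq_real, real_inner_comm]; try ring
  have h6 : ⟪v', v'⟫ = ‖v'‖^2 := real_inner_self_eq_norm_sq v'
  have h7 : ⟪w - QopMap L α P w, w - QopMap L α P w⟫ = ‖w - QopMap L α P w‖^2 :=
    real_inner_self_eq_norm_sq _
  have h8 : ⟪QopMap L α P w, v'⟫ = ⟪w, v'⟫ - ⟪w - QopMap L α P w, v'⟫ := by
    rw [← @inner_sub_left]; congr 1; abel
  have h9 : ⟪QopMap L α P w, w - QopMap L α P w⟫
      = ⟪w, w - QopMap L α P w⟫ - ⟪w - QopMap L α P w, w - QopMap L α P w⟫ := by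
    rw [← @inner_sub_left]; congr 1; abel
  have h10 : ⟪w, v'⟫ - ⟪w, w - QopMap L α P w⟫ = ⟪w, v' - (w - QopMap L α P w)⟫ := by
    rw [eq_comm, @inner_sub_right]
  have h11 : ⟪w - QopMap L α P w, v' - (w - QopMap L α P w)⟫
      = ⟪w - QopMap L α P w, v'⟫ - ‖w - QopMap L α P w‖^2 := by rw [h4, h7]
  rw [h11] at hd
  linarith

lemma comix_lb (hg : ∀ k, Gamma0 (g k)) (hP : ∀ k, IsProx (g k) (P k))
    (hα : ∀ k, α k ∈ Set.Ioc (0 : ℝ) 1) (w z : H) :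
    ((⟪w - QopMap L α P w, z⟫ - (⟪w, w - QopMap L α P w⟫ - mRfun L g α P w
        - ‖w - QopMap L α P w‖^2/2) : ℝ) : EReal) ≤ comix L g α z := by
  rw [comix]
  refine le_iSup_of_le (w - QopMap L α P w) ?_
  simp only [phiv_eq hg hP hα, ← EReal.coe_sub]
  exact le_rfl

lemma comix_master (hg : ∀ k, Gamma0 (g k)) (hP : ∀ k, IsProx (g k) (P k))
    (hα : ∀ k, α k ∈ Set.Ioc (0 : ℝ) 1) (hαsum : ∑ k, α k = 1) (hL : ∀ k, ‖L k‖ ≤ 1)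
    (w : H) :
    comix L g α (QopMap L α P w)
        = ((⟪w - QopMap L α P w, QopMap L α P w⟫ - (⟪w, w - QopMap L α P w⟫
            - mRfun L g α P w - ‖w - QopMap L α P w‖^2/2) : ℝ) : EReal)
    ∧ (w - QopMap L α P w) ∈ subdiff (comix L g α) (QopMap L α P w) := by
  have hval : comix L g α (QopMap L α P w)
      = ((⟪w - QopMap L α P w, QopMap L α P w⟫ - (⟪w, w - QopMap L α P w⟫
          - mRfun L g α P w - ‖w - QopMap L α P w‖^2/2) : ℝ) : EReal) := by
    refine le_antisymm ?_ ?_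
    · rw [comix]
      refine iSup_le fun u' => ?_
      have hlow := phi_subgrad hg hP hα hαsum hL w u'
      rw [EReal.coe_add] at hlow
      have h2 := EReal.sub_le_sub
        (le_refl ((⟪u', QopMap L α P w⟫ : ℝ) : EReal)) hlow
      refine le_trans h2 (le_of_eq ?_)
      rw [← EReal.coe_add, ← EReal.coe_sub, EReal.coe_eq_coe_iff]
      have ha : ⟪QopMap L α P w, u' - (w - QopMap L α P w)⟫
          = ⟪QopMap L α P w, u'⟫ - ⟪QopMap L α P w, w - QopMap L α P w⟫ := by
        rw [@inner_sub_right]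
      have hb : ⟪u', QopMap L α P w⟫ = ⟪QopMap L α P w, u'⟫ := real_inner_comm _ _
      have hc : ⟪w - QopMap L α P w, QopMap L α P w⟫
          = ⟪QopMap L α P w, w - QopMap L α P w⟫ := real_inner_comm _ _
      linarith
    · rw [comix]
      refine le_iSup_of_le (w - QopMap L α P w) ?_
      simp only [phiv_eq hg hP hα, ← EReal.coe_sub]
      exact le_rfl
  refine ⟨hval, fun z => ?_⟩
  rw [hval, ← EReal.coe_add]
  refine le_trans (le_of_eq ?_) (comix_lb hg hP hα w z)
  rw [EReal.coe_eq_coe_iff]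
  have h1 : ⟪z - QopMap L α P w, w - QopMap L α P w⟫
      = ⟪w - QopMap L α P w, z⟫ - ⟪w - QopMap L α P w, QopMap L α P w⟫ := by
    rw [real_inner_comm, @inner_sub_right]
  linarith

lemma comix_ne_bot (hg : ∀ k, Gamma0 (g k)) (hP : ∀ k, IsProx (g k) (P k))
    (hα : ∀ k, α k ∈ Set.Ioc (0 : ℝ) 1) (z : H) : comix L g α z ≠ ⊥ :=
  fun h => by
    have := comix_lb (L := L) (P := P) hg hP hα 0 z
    rw [h] at this
    exact (EReal.bot_lt_coe _).not_ge this

lemma comix_ne_top_somewhere (hg : ∀ k, Gamma0 (g k)) (hP : ∀ k, IsProx (g k) (P k))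
    (hα : ∀ k, α k ∈ Set.Ioc (0 : ℝ) 1) (hαsum : ∑ k, α k = 1) (hL : ∀ k, ‖L k‖ ≤ 1) :
    comix L g α (QopMap L α P 0) ≠ ⊤ := by
  rw [(comix_master hg hP hα hαsum hL 0).1]
  exact EReal.coe_ne_top _

lemma comix_prox (hg : ∀ k, Gamma0 (g k)) (hP : ∀ k, IsProx (g k) (P k))
    (hα : ∀ k, α k ∈ Set.Ioc (0 : ℝ) 1) (hαsum : ∑ k, α k = 1) (hL : ∀ k, ‖L k‖ ≤ 1)
    {x v : H} (hv : v ∈ subdiff (comix L g α) x) : QopMap L α P (x + v) = x := by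
  have hmaster := comix_master hg hP hα hαsum hL (x + v)
  have hmono := subdiff_mono' (comix_ne_bot hg hP hα)
    (comix_ne_top_somewhere hg hP hα hαsum hL) hv hmaster.2
  have hsub : v - (x + v - QopMap L α P (x + v)) = QopMap L α P (x + v) - x := by abel
  rw [hsub] at hmono
  have hneg : ⟪x - QopMap L α P (x + v), QopMap L α P (x + v) - x⟫
      = - ‖x - QopMap L α P (x + v)‖^2 := by
    have h1 : QopMap L α P (x + v) - x = -(x - QopMap L α P (x + v)) := by abel
    rw [h1, inner_neg_right, real_inner_self_eq_norm_sq]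
  rw [hneg] at hmono
  have hz : ‖x - QopMap L α P (x + v)‖^2 = 0 := le_antisymm (by linarith) (sq_nonneg _)
  have h0 : x - QopMap L α P (x + v) = 0 :=
    norm_eq_zero.1 (pow_eq_zero_iff (n := 2) (by norm_num) |>.1 hz)
  exact (sub_eq_zero.1 h0).symm

lemma Qop_firm (hg : ∀ k, Gamma0 (g k)) (hP : ∀ k, IsProx (g k) (P k))
    (hα : ∀ k, α k ∈ Set.Ioc (0 : ℝ) 1) (hαsum : ∑ k, α k = 1) (hL : ∀ k, ‖L k‖ ≤ 1)
    (w w' : H) :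
    ‖QopMap L α P w - QopMap L α P w'‖^2 ≤ ⟪QopMap L α P w - QopMap L α P w', w - w'⟫ := by
  have hmono := subdiff_mono' (comix_ne_bot hg hP hα)
    (comix_ne_top_somewhere hg hP hα hαsum hL)
    (comix_master hg hP hα hαsum hL w).2 (comix_master hg hP hα hαsum hL w').2
  have hexp : (w - QopMap L α P w) - (w' - QopMap L α P w')
      = (w - w') - (QopMap L α P w - QopMap L α P w') := by abel
  rw [hexp, inner_sub_right, real_inner_self_eq_norm_sq] at hmono
  linarith
end Sec4

lemma weak_seq_compact {H : Type*} [NormedAddCommGroup H] [InnerProductSpace ℝ H]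
    [CompleteSpace H] (y : ℕ → H) (C : ℝ) (hb : ∀ n, ‖y n‖ ≤ C) :
    ∃ φ : ℕ → ℕ, StrictMono φ ∧ ∃ yb : H,
      ∀ u : H, Tendsto (fun j => (⟪y (φ j), u⟫ : ℝ)) atTop (nhds (⟪yb, u⟫ : ℝ)) := by
  classical
  have hC0 : 0 ≤ C := le_trans (norm_nonneg _) (hb 0)
  have hyV : ∀ n, y n ∈ (Submodule.span ℝ (Set.range y)).topologicalClosure := fun n =>
    Submodule.le_topologicalClosure _ (Submodule.subset_span ⟨n, rfl⟩)
  set V := (Submodule.span ℝ (Set.range y)).topologicalClosure with hVdef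
  have hVsep : TopologicalSpace.IsSeparable (closure ((Submodule.span ℝ (Set.range y)) : Set H)) :=
    (((Set.countable_range y).isSeparable).span (R := ℝ)).closure
  have hVco : (V : Set H) = closure ((Submodule.span ℝ (Set.range y)) : Set H) :=
    Submodule.topologicalClosure_coe _
  obtain ⟨c, hc_count, hc_dense⟩ := hVsep
  -- enumerate c (allow empty by inserting 0)
  obtain ⟨d, hd⟩ : ∃ d : ℕ → H, insert (0:H) c = Set.range d :=
    (hc_count.insert 0).exists_eq_range (Set.insert_nonempty _ _)
  have hc_dense' : (V : Set H) ⊆ closure (Set.range d) := by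
    rw [hVco]
    exact hc_dense.trans (closure_mono (by rw [← hd]; exact Set.subset_insert _ _))
  -- diagonal subsequence on the countable family d
  have hFmem : ∀ n i, (⟪y n, d i⟫ : ℝ) ∈ Set.Icc (-(C * ‖d i‖)) (C * ‖d i‖) := by
    intro n i
    have h1 : |(⟪y n, d i⟫ : ℝ)| ≤ C * ‖d i‖ :=
      (abs_real_inner_le_norm _ _).trans (by
        have := mul_le_mul_of_nonneg_right (hb n) (norm_nonneg (d i)); linarith)
    exact abs_le.1 h1
  have hc2 : IsCompact (Set.univ.pi fun i => Set.Icc (-(C * ‖d i‖)) (C * ‖d i‖)) :=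
    isCompact_univ_pi fun i => isCompact_Icc
  obtain ⟨ℓ, -, φ, hφ, hconv⟩ := hc2.tendsto_subseq
    (x := fun n => fun i => (⟪y n, d i⟫ : ℝ))
    (fun n => Set.mem_univ_pi.2 (fun i => hFmem n i))
  have hconv' : ∀ i, Tendsto (fun j => (⟪y (φ j), d i⟫ : ℝ)) atTop (nhds (ℓ i)) := fun i => by
    have := (continuous_apply i).continuousAt.tendsto.comp hconv
    exact this
  -- Cauchy for every v
  have hcauchy : ∀ v : H, CauchySeq (fun j => (⟪y (φ j), v⟫ : ℝ)) := by
    intro v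
    haveI : CompleteSpace V := (Submodule.isClosed_topologicalClosure _).completeSpace_coe
    obtain ⟨a, ha, b, hbmem, hab⟩ := Submodule.exists_add_mem_mem_orthogonal (K := V) v
    have hinner : ∀ n, (⟪y n, v⟫ : ℝ) = ⟪y n, a⟫ := by
      intro n
      have hzero : (⟪y n, b⟫ : ℝ) = 0 :=
        (Submodule.mem_orthogonal V b).1 hbmem (y n) (hyV n)
      rw [hab, inner_add_right, hzero, add_zero]
    simp only [hinner]
    rw [Metric.cauchySeq_iff]
    intro ε hε
    -- find d i close to a
    have haV : a ∈ closure (Set.range d) := hc_dense' ha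
    obtain ⟨w, ⟨i, hw⟩, hwa⟩ := Metric.mem_closure_iff.1 haV (ε/(8*C+1)) (by positivity)
    have hdia : ‖a - d i‖ < ε/(8*C+1) := by
      rw [← hw] at hwa; simpa [dist_eq_norm] using hwa
    -- Cauchy tail for coordinate i
    obtain ⟨N, hN⟩ := (Metric.cauchySeq_iff.1 (hconv' i).cauchySeq) (ε/2) (by positivity)
    refine ⟨N, fun m hm m' hm' => ?_⟩
    have key : ∀ n n', |(⟪y n - y n', a - d i⟫ : ℝ)| ≤ 2*C*(ε/(8*C+1)) := by
      intro n n'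
      calc |(⟪y n - y n', a - d i⟫ : ℝ)| ≤ ‖y n - y n'‖ * ‖a - d i‖ := abs_real_inner_le_norm _ _
        _ ≤ (2*C) * (ε/(8*C+1)) := by
            apply mul_le_mul _ hdia.le (norm_nonneg _) (by positivity)
            calc ‖y n - y n'‖ ≤ ‖y n‖ + ‖y n'‖ := norm_sub_le _ _
              _ ≤ 2*C := by have := hb n; have := hb n'; linarith
    have h2 : 2*C*(ε/(8*C+1)) ≤ ε/4 := by
      have h8 : (0:ℝ) < 8*C+1 := by linarith
      rw [← mul_div_assoc, div_le_div_iff₀ h8 (by norm_num : (0:ℝ) < 4)]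
      nlinarith
    have hsplit : ∀ n n', (⟪y n, a⟫ : ℝ) - ⟪y n', a⟫
        = ⟪y n - y n', a - d i⟫ + (⟪y n, d i⟫ - ⟪y n', d i⟫) := by
      intro n n'
      simp [inner_sub_left, inner_sub_right]; try ring
    rw [Real.dist_eq, hsplit (φ m) (φ m')]
    have htail : |(⟪y (φ m), d i⟫ : ℝ) - ⟪y (φ m'), d i⟫| < ε/2 := by
      have h1 := hN m hm m' hm'
      rw [Real.dist_eq] at h1
      have h2' := dist_triangle ((⟪y (φ m), d i⟫:ℝ)) (ℓ i) ((⟪y (φ m'), d i⟫:ℝ))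
      calc |(⟪y (φ m), d i⟫ : ℝ) - ⟪y (φ m'), d i⟫| = dist ((⟪y (φ m), d i⟫:ℝ)) ((⟪y (φ m'), d i⟫:ℝ)) := by
            rw [Real.dist_eq]
        _ < ε/2 := h1
    calc |(⟪y (φ m) - y (φ m'), a - d i⟫ : ℝ) + (⟪y (φ m), d i⟫ - ⟪y (φ m'), d i⟫)|
        ≤ |(⟪y (φ m) - y (φ m'), a - d i⟫ : ℝ)| + |(⟪y (φ m), d i⟫ - ⟪y (φ m'), d i⟫)| := abs_add_le _ _
      _ < ε/4 + ε/2 := by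
          have := key (φ m) (φ m'); exact add_lt_add_of_le_of_lt (this.trans h2) htail
      _ ≤ ε := by linarith
  -- build the limit functional
  have hlim : ∀ v : H, ∃ r : ℝ, Tendsto (fun j => (⟪y (φ j), v⟫ : ℝ)) atTop (nhds r) :=
    fun v => cauchySeq_tendsto_of_complete (hcauchy v)
  choose r hr using hlim
  have hrbound : ∀ v, |r v| ≤ C * ‖v‖ := by
    intro v
    have : ∀ j, |(⟪y (φ j), v⟫ : ℝ)| ≤ C * ‖v‖ := fun j =>
      (abs_real_inner_le_norm _ _).trans
        (mul_le_mul_of_nonneg_right (hb _) (norm_nonneg _))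
    exact le_of_tendsto ((hr v).abs) (Eventually.of_forall this)
  have hadd : ∀ v w, r (v + w) = r v + r w := by
    intro v w
    refine tendsto_nhds_unique (hr (v+w)) ?_
    have := (hr v).add (hr w)
    simpa [inner_add_right] using this
  have hsmul : ∀ (t : ℝ) v, r (t • v) = t * r v := by
    intro t v
    refine tendsto_nhds_unique (hr (t • v)) ?_
    have := (hr v).const_mul t
    simpa [real_inner_smul_right] using this
  let Flin : H →ₗ[ℝ] ℝ :=
    { toFun := r, map_add' := hadd, map_smul' := by intro t v; simpa using hsmul t v }
  let Fcont : H →L[ℝ] ℝ := Flin.mkContinuous C (fun v => by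
      rw [Real.norm_eq_abs]; exact hrbound v)
  refine ⟨φ, hφ, (InnerProductSpace.toDual ℝ H).symm Fcont, fun u => ?_⟩
  have : (⟪(InnerProductSpace.toDual ℝ H).symm Fcont, u⟫ : ℝ) = Fcont u := by
    simpa using congrFun (congrArg _ ((InnerProductSpace.toDual ℝ H).apply_symm_apply Fcont)) u
  rw [this]
  exact hr u
section Sec5
variable {H : Type*} [NormedAddCommGroup H] [InnerProductSpace ℝ H]

lemma nonexp_of_firm {T : H → H} (hT : ∀ a b, ‖T a - T b‖^2 ≤ ⟪T a - T b, a - b⟫) :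
    ∀ a b, ‖T a - T b‖ ≤ ‖a - b‖ := by
  intro a b
  have h1 := hT a b
  have h2 : ⟪T a - T b, a - b⟫ ≤ ‖T a - T b‖ * ‖a - b‖ := real_inner_le_norm _ _
  nlinarith [norm_nonneg (T a - T b), norm_nonneg (a - b)]

lemma refl_nonexp {T : H → H} (hT : ∀ a b, ‖T a - T b‖^2 ≤ ⟪T a - T b, a - b⟫) :
    ∀ a b, ‖((2:ℝ)•T a - a) - ((2:ℝ)•T b - b)‖ ≤ ‖a - b‖ := by
  intro a b
  have hid : ((2:ℝ)•T a - a) - ((2:ℝ)•T b - b) = (2:ℝ)•(T a - T b) - (a - b) := by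
    module
  rw [hid]
  have hexp : ‖(2:ℝ)•(T a - T b) - (a - b)‖^2
      = 4*‖T a - T b‖^2 - 4*⟪T a - T b, a - b⟫ + ‖a - b‖^2 := by
    rw [@norm_sub_sq_real, real_inner_smul_left, norm_smul]
    simp [mul_pow]
    try ring
  have h1 := hT a b
  have h2 : ‖(2:ℝ)•(T a - T b) - (a - b)‖^2 ≤ ‖a - b‖^2 := by rw [hexp]; linarith
  nlinarith [norm_nonneg ((2:ℝ)•(T a - T b) - (a - b)), norm_nonneg (a - b)]

lemma km_fejer {N : H → H} (hN : ∀ a b, ‖N a - N b‖ ≤ ‖a - b‖) {w : H} (hw : N w = w)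
    (y : H) {μ : ℝ} (hμ0 : 0 ≤ μ) (hμ1 : μ ≤ 1) :
    ‖(y + μ•(N y - y)) - w‖^2 ≤ ‖y - w‖^2 - μ*(1-μ)*‖N y - y‖^2 := by
  have hb : ‖N y - w‖ ≤ ‖y - w‖ := by
    have := hN y w; rwa [hw] at this
  have hb2 : ‖N y - w‖^2 ≤ ‖y - w‖^2 := by nlinarith [norm_nonneg (N y - w), norm_nonneg (y - w)]
  have hid : (y + μ•(N y - y)) - w = (y - w) + μ•((N y - w) - (y - w)) := by module
  have hid2 : N y - y = (N y - w) - (y - w) := by abel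
  rw [hid, hid2]
  have hexp : ‖(y - w) + μ•((N y - w) - (y - w))‖^2
      = ‖y - w‖^2 + 2*(μ*⟪y - w, (N y - w) - (y - w)⟫) + μ^2*‖(N y - w) - (y - w)‖^2 := by
    rw [@norm_add_sq_real, real_inner_smul_right, norm_smul]
    simp [mul_pow, sq_abs]
    try ring
  have hin : ⟪y - w, (N y - w) - (y - w)⟫ = ⟪y - w, N y - w⟫ - ‖y - w‖^2 := by
    rw [inner_sub_right, real_inner_self_eq_norm_sq]
  have hn2 : ‖(N y - w) - (y - w)‖^2
      = ‖N y - w‖^2 - 2*⟪y - w, N y - w⟫ + ‖y - w‖^2 := by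
    rw [@norm_sub_sq_real, real_inner_comm]; try ring
  rw [hexp, hin, hn2]
  nlinarith [sq_nonneg μ, sq_nonneg (1 - μ), mul_nonneg hμ0 (sub_nonneg.2 hμ1)]

lemma km_residual {N : H → H} (hN : ∀ a b, ‖N a - N b‖ ≤ ‖a - b‖)
    (y : H) {μ : ℝ} (hμ0 : 0 ≤ μ) (hμ1 : μ ≤ 1) :
    ‖N (y + μ•(N y - y)) - (y + μ•(N y - y))‖ ≤ ‖N y - y‖ := by
  set y' := y + μ•(N y - y) with hy'
  have h1 : ‖N y' - y'‖ ≤ ‖N y' - N y‖ + ‖N y - y'‖ := norm_sub_le_norm_sub_add_norm_sub _ _ _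
  have h2 : ‖N y' - N y‖ ≤ ‖y' - y‖ := hN _ _
  have h3 : ‖y' - y‖ = μ * ‖N y - y‖ := by
    rw [hy']
    have : y + μ•(N y - y) - y = μ•(N y - y) := by abel
    rw [this, norm_smul, Real.norm_eq_abs, abs_of_nonneg hμ0]
  have h4 : N y - y' = (1 - μ)•(N y - y) := by rw [hy']; module
  have h5 : ‖N y - y'‖ = (1-μ) * ‖N y - y‖ := by
    rw [h4, norm_smul, Real.norm_eq_abs, abs_of_nonneg (by linarith)]
  calc ‖N y' - y'‖ ≤ ‖N y' - N y‖ + ‖N y - y'‖ := h1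
    _ ≤ μ * ‖N y - y‖ + (1-μ) * ‖N y - y‖ := by rw [h5]; exact add_le_add (h2.trans h3.le) le_rfl
    _ = ‖N y - y‖ := by ring

lemma demiclosed {N : H → H} (hN : ∀ a b, ‖N a - N b‖ ≤ ‖a - b‖)
    (w : ℕ → H) (q : H) (D : ℝ) (hD : ∀ j, ‖w j - q‖ ≤ D)
    (hwq : ∀ u : H, Filter.Tendsto (fun j => (⟪w j, u⟫ : ℝ)) Filter.atTop (nhds (⟪q, u⟫ : ℝ)))
    (hres : Filter.Tendsto (fun j => ‖N (w j) - w j‖) Filter.atTop (nhds 0)) :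
    N q = q := by
  have key : ∀ j, ‖q - N q‖^2 ≤ ‖N (w j) - w j‖^2 + 2*‖N (w j) - w j‖*D
      - 2*(⟪w j, q - N q⟫ - ⟪q, q - N q⟫) := by
    intro j
    have h1 : ‖w j - N q‖ ≤ ‖N (w j) - w j‖ + ‖w j - q‖ := by
      have t1 : ‖w j - N q‖ ≤ ‖w j - N (w j)‖ + ‖N (w j) - N q‖ :=
        norm_sub_le_norm_sub_add_norm_sub _ _ _
      have t2 : ‖N (w j) - N q‖ ≤ ‖w j - q‖ := hN _ _
      have t3 : ‖w j - N (w j)‖ = ‖N (w j) - w j‖ := norm_sub_rev _ _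
      linarith
    have h2 : ‖w j - N q‖^2 = ‖w j - q‖^2 + 2*⟪w j - q, q - N q⟫ + ‖q - N q‖^2 := by
      have : w j - N q = (w j - q) + (q - N q) := by abel
      rw [this, @norm_add_sq_real]
    have h3 : ⟪w j - q, q - N q⟫ = ⟪w j, q - N q⟫ - ⟪q, q - N q⟫ := by
      rw [@inner_sub_left]
    have h4 : ‖w j - N q‖^2 ≤ (‖N (w j) - w j‖ + ‖w j - q‖)^2 := by
      nlinarith [norm_nonneg (w j - N q), norm_nonneg (N (w j) - w j), norm_nonneg (w j - q),
        abs_nonneg (0:ℝ)]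
    have hDj := hD j
    have hrj : 0 ≤ ‖N (w j) - w j‖ := norm_nonneg _
    nlinarith [h2, h3, h4]
  have hlim : Filter.Tendsto (fun j => ‖N (w j) - w j‖^2 + 2*‖N (w j) - w j‖*D
      - 2*(⟪w j, q - N q⟫ - ⟪q, q - N q⟫)) Filter.atTop (nhds 0) := by
    have t1 : Filter.Tendsto (fun j => ‖N (w j) - w j‖^2) Filter.atTop (nhds 0) := by
      have := hres.mul hres
      simpa [pow_two] using this
    have t2 : Filter.Tendsto (fun j => 2*‖N (w j) - w j‖*D) Filter.atTop (nhds 0) := by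
      have := (hres.const_mul 2).mul_const D
      simpa [mul_assoc] using this
    have t3 : Filter.Tendsto (fun j => (⟪w j, q - N q⟫ : ℝ) - ⟪q, q - N q⟫)
        Filter.atTop (nhds 0) := by
      have := (hwq (q - N q)).sub_const (⟪q, q - N q⟫ : ℝ)
      simpa using this
    have := (t1.add t2).sub (t3.const_mul 2)
    simpa [mul_comm] using this
  have hle : ‖q - N q‖^2 ≤ 0 := ge_of_tendsto hlim (Filter.Eventually.of_forall key)
  have : ‖q - N q‖ = 0 := by nlinarith [norm_nonneg (q - N q)]
  have h0 : q - N q = 0 := norm_eq_zero.1 this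
  have := sub_eq_zero.1 h0
  exact this.symm

lemma tendsto_of_subseq_weak [CompleteSpace H] (x : ℕ → H) (xb : H) (C : ℝ)
    (hb : ∀ n, ‖x n‖ ≤ C)
    (huniq : ∀ σ : ℕ → ℕ, StrictMono σ → ∀ q : H,
      (∀ u : H, Filter.Tendsto (fun j => (⟪x (σ j), u⟫ : ℝ)) Filter.atTop (nhds (⟪q, u⟫ : ℝ)))
        → q = xb) :
    ∀ u : H, Filter.Tendsto (fun n => (⟪x n, u⟫ : ℝ)) Filter.atTop (nhds (⟪xb, u⟫ : ℝ)) := by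
  intro u
  by_contra hcon
  rw [Metric.tendsto_atTop] at hcon
  push_neg at hcon
  obtain ⟨ε, hε, hfreq⟩ := hcon
  obtain ⟨ψ, hψ, hψprop⟩ := Filter.extraction_of_frequently_atTop
    (Filter.frequently_atTop.2 fun N => by
      obtain ⟨n, hn1, hn2⟩ := hfreq N; exact ⟨n, hn1, hn2⟩)
  obtain ⟨θ, hθ, q, hq⟩ := weak_seq_compact (fun j => x (ψ j)) C (fun j => hb _)
  have hqeq : q = xb := huniq (ψ ∘ θ) (hψ.comp hθ) q (fun u' => hq u')
  subst hqeq
  have hconv := hq u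
  have hev := hconv.eventually (Metric.ball_mem_nhds (⟪q, u⟫ : ℝ) hε)
  obtain ⟨j, hj⟩ := hev.exists
  exact absurd (hψprop (θ j)) (by simpa [Metric.mem_ball, dist_comm] using hj)
end Sec5
section Sec6
variable {H : Type*} [NormedAddCommGroup H] [InnerProductSpace ℝ H] [CompleteSpace H]
  {p : ℕ} {G : Fin p → Type*} [∀ k, NormedAddCommGroup (G k)]
  [∀ k, InnerProductSpace ℝ (G k)] [∀ k, CompleteSpace (G k)]

/-- The Douglas–Rachford nonexpansive operator `R_f ∘ R_h`. -/
def NDR (L : ∀ k, H →L[ℝ] G k) (α : Fin p → ℝ) (P : ∀ k, G k → G k) (Pf : H → H)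
    (w : H) : H :=
  (2:ℝ)•Pf ((2:ℝ)•QopMap L α P w - w) - ((2:ℝ)•QopMap L α P w - w)

variable {L : ∀ k, H →L[ℝ] G k} {g : ∀ k, (G k) → EReal} {α : Fin p → ℝ} {P : ∀ k, G k → G k}
  {f : H → EReal} {Pf : H → H}

lemma prox_firm (hf : Gamma0 f) (hPf : IsProx f Pf) (a b : H) :
    ‖Pf a - Pf b‖^2 ≤ ⟪Pf a - Pf b, a - b⟫ := by
  have hmono := subdiff_mono hf (prox_subdiff hf hPf a) (prox_subdiff hf hPf b)
  have hexp : (a - Pf a) - (b - Pf b) = (a - b) - (Pf a - Pf b) := by abel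
  rw [hexp, inner_sub_right, real_inner_self_eq_norm_sq] at hmono
  linarith

lemma NDR_nonexp (hg : ∀ k, Gamma0 (g k)) (hP : ∀ k, IsProx (g k) (P k))
    (hα : ∀ k, α k ∈ Set.Ioc (0 : ℝ) 1) (hαsum : ∑ k, α k = 1) (hL : ∀ k, ‖L k‖ ≤ 1)
    (hf : Gamma0 f) (hPf : IsProx f Pf) (a b : H) :
    ‖NDR L α P Pf a - NDR L α P Pf b‖ ≤ ‖a - b‖ := by
  refine le_trans (refl_nonexp (prox_firm hf hPf) _ _) ?_
  have h2 : ∀ w w', ‖QopMap L α P w - QopMap L α P w'‖^2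
      ≤ ⟪QopMap L α P w - QopMap L α P w', w - w'⟫ := Qop_firm hg hP hα hαsum hL
  exact refl_nonexp h2 a b

lemma T_id_aux (X Y E a b cc d : H) :
    ⟪X - a, (Y - X) - b⟫ + ⟪(X - E) - cc, ((2:ℝ)•X - Y - (X - E)) - d⟫
      = (⟪E, Y + d - cc⟫ - ‖E‖^2) + ⟪X, a - b - d - cc⟫ + ⟪Y, cc - a⟫
        + (⟪a, b⟫ + ⟪cc, d⟫) := by
  simp only [inner_sub_left, inner_sub_right, inner_add_left, inner_add_right,
    real_inner_smul_left, real_inner_smul_right, real_inner_self_eq_norm_sq]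
  have c1 := real_inner_comm X Y
  have c2 := real_inner_comm X E
  have c3 := real_inner_comm X a
  have c4 := real_inner_comm X b
  have c5 := real_inner_comm X cc
  have c6 := real_inner_comm X d
  have c7 := real_inner_comm Y E
  have c8 := real_inner_comm Y a
  have c9 := real_inner_comm Y cc
  have c10 := real_inner_comm E a
  have c11 := real_inner_comm E cc
  have c12 := real_inner_comm E d
  have c13 := real_inner_comm a b
  have c14 := real_inner_comm cc d
  have c15 := real_inner_comm Y b
  have c16 := real_inner_comm Y d
  have c17 := real_inner_comm E b
  have c18 := real_inner_comm a cc
  have c19 := real_inner_comm a d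
  have c20 := real_inner_comm b cc
  have c21 := real_inner_comm b d
  linarith

lemma T_id (X Y Z a b cc d : H) :
    ⟪X - a, (Y - X) - b⟫ + ⟪Z - cc, ((2:ℝ)•X - Y - Z) - d⟫
      = (⟪X - Z, Y + d - cc⟫ - ‖X - Z‖^2) + ⟪X, a - b - d - cc⟫ + ⟪Y, cc - a⟫
        + (⟪a, b⟫ + ⟪cc, d⟫) := by
  have h := T_id_aux X Y (X - Z) a b cc d
  rwa [sub_sub_cancel] at h
end Sec6
set_option maxHeartbeats 2000000 in
/-- Proposition 4.2 (Douglas–Rachford): the sequence `(x_n)` produced by the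
Douglas–Rachford iteration applied to `f` and `h = comix(L_k,g_k)` converges weakly to a
minimizer of `f + h`. -/
theorem douglasRachford_comix [CompleteSpace H] [∀ k, CompleteSpace (G k)]
    (L : ∀ k, H →L[ℝ] G k) (g : ∀ k, (G k) → EReal) (α : Fin p → ℝ)
    (hg : ∀ k, Gamma0 (g k)) (hL : ∀ k, ‖L k‖ ≤ 1)
    (hα : ∀ k, α k ∈ Set.Ioc (0 : ℝ) 1) (hαsum : ∑ k, α k = 1)
    (f : H → EReal) (hf : Gamma0 f)
    (hrange : ∃ x : H, ∃ u ∈ subdiff f x, ∃ v ∈ subdiff (comix L g α) x, u + v = 0)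
    (P : ∀ k, G k → G k) (hP : ∀ k, IsProx (g k) (P k))
    (Pf : H → H) (hPf : IsProx f Pf)
    (lam : ℕ → ℝ) (hlam : ∀ n, lam n ∈ Set.Ioo (0 : ℝ) 2)
    (hlamdiv : Tendsto (fun N => ∑ n ∈ Finset.range N, lam n * (2 - lam n)) atTop atTop)
    (x y z : ℕ → H)
    (hx : ∀ n, x n = y n + ∑ k, α k •
      (ContinuousLinearMap.adjoint (L k)) (P k (L k (y n)) - L k (y n)))
    (hz : ∀ n, z n = Pf ((2 : ℝ) • x n - y n))
    (hy : ∀ n, y (n + 1) = y n + lam n • (z n - x n)) :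
    ∃ xbar : H,
      (∀ w : H, f xbar + comix L g α xbar ≤ f w + comix L g α w) ∧
      ∀ u : H, Tendsto (fun n => (⟪x n, u⟫ : ℝ)) atTop (nhds (⟪xbar, u⟫ : ℝ)) := by
  classical
  -- basic abbreviations
  have hxB : ∀ n, x n = QopMap L α P (y n) := fun n => by rw [hx n]; rfl
  have hNnonexp : ∀ a b, ‖NDR L α P Pf a - NDR L α P Pf b‖ ≤ ‖a - b‖ :=
    NDR_nonexp hg hP hα hαsum hL hf hPf
  have hzxN : ∀ n, z n - x n = (2⁻¹:ℝ)•(NDR L α P Pf (y n) - y n) := by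
    intro n
    rw [hz n, hxB n, NDR]
    module
  have hyN : ∀ n, y (n + 1) = y n + (lam n / 2)•(NDR L α P Pf (y n) - y n) := by
    intro n
    rw [hy n, hzxN n, smul_smul, div_eq_mul_inv]
  have hμ0 : ∀ n, 0 ≤ lam n / 2 := fun n => by have := (hlam n).1; linarith
  have hμ1 : ∀ n, lam n / 2 ≤ 1 := fun n => by have := (hlam n).2; linarith
  -- the fixed point ybar
  obtain ⟨x₀, u₀, hu₀, v₀, hv₀, huv⟩ := hrange
  have hu_eq : u₀ = -v₀ := eq_neg_of_add_eq_zero_left huv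
  have hQyb : QopMap L α P (x₀ + v₀) = x₀ := comix_prox hg hP hα hαsum hL hv₀
  have hPfyb : Pf ((2:ℝ)•x₀ - (x₀ + v₀)) = x₀ := by
    have harg : (2:ℝ)•x₀ - (x₀ + v₀) = x₀ + u₀ := by rw [hu_eq]; module
    rw [harg]
    exact subdiff_to_prox hf hPf hu₀
  have hNyb : NDR L α P Pf (x₀ + v₀) = x₀ + v₀ := by
    rw [NDR, hQyb, hPfyb]
    module
  set ybar := x₀ + v₀ with hybar
  -- Fejér monotonicity
  have hfejer : ∀ w, NDR L α P Pf w = w → ∀ n,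
      ‖y (n+1) - w‖^2 ≤ ‖y n - w‖^2
        - (lam n / 2)*(1 - lam n / 2)*‖NDR L α P Pf (y n) - y n‖^2 := by
    intro w hw n
    rw [hyN n]
    exact km_fejer hNnonexp hw (y n) (hμ0 n) (hμ1 n)
  have hdist_anti : ∀ w, NDR L α P Pf w = w → Antitone (fun n => ‖y n - w‖^2) := by
    intro w hw
    refine antitone_nat_of_succ_le fun n => ?_
    have h1 := hfejer w hw n
    have h2 : 0 ≤ (lam n / 2)*(1 - lam n / 2)*‖NDR L α P Pf (y n) - y n‖^2 :=
      mul_nonneg (mul_nonneg (hμ0 n) (by linarith [hμ1 n])) (sq_nonneg _)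
    linarith
  have hdist_lim : ∀ w, NDR L α P Pf w = w →
      Tendsto (fun n => ‖y n - w‖^2) atTop (nhds (⨅ n, ‖y n - w‖^2)) := by
    intro w hw
    exact tendsto_atTop_ciInf (hdist_anti w hw)
      ⟨0, fun r ⟨n, hn⟩ => hn ▸ sq_nonneg _⟩
  -- boundedness
  set C : ℝ := ‖y 0 - ybar‖ + ‖ybar‖ with hC
  have hyC : ∀ n, ‖y n‖ ≤ C := by
    intro n
    have h1 : ‖y n - ybar‖^2 ≤ ‖y 0 - ybar‖^2 := hdist_anti ybar hNyb (Nat.zero_le n)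
    have h2 : ‖y n - ybar‖ ≤ ‖y 0 - ybar‖ := by
      nlinarith [norm_nonneg (y n - ybar), norm_nonneg (y 0 - ybar)]
    calc ‖y n‖ = ‖(y n - ybar) + ybar‖ := by rw [sub_add_cancel]
      _ ≤ ‖y n - ybar‖ + ‖ybar‖ := norm_add_le _ _
      _ ≤ C := by rw [hC]; linarith
  -- residual tends to zero
  set E : ℕ → ℝ := fun n => ‖NDR L α P Pf (y n) - y n‖ with hE
  have hE_anti : Antitone E := by
    refine antitone_nat_of_succ_le fun n => ?_
    rw [hE]
    simp only
    rw [hyN n]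
    exact km_residual hNnonexp (y n) (hμ0 n) (hμ1 n)
  have hEnonneg : ∀ n, 0 ≤ E n := fun n => norm_nonneg _
  have hsum_bound : ∀ m, ∑ n ∈ Finset.range m, (lam n / 2)*(1 - lam n / 2)*E n^2
      ≤ ‖y 0 - ybar‖^2 := by
    intro m
    have key : ∀ m, ∑ n ∈ Finset.range m, (lam n / 2)*(1 - lam n / 2)*E n^2
        + ‖y m - ybar‖^2 ≤ ‖y 0 - ybar‖^2 := by
      intro m
      induction m with
      | zero => simp
      | succ m ih =>
          rw [Finset.sum_range_succ]
          have h1 : ‖y (m+1) - ybar‖^2 ≤ ‖y m - ybar‖^2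
              - lam m / 2 * (1 - lam m / 2) * E m^2 := hfejer ybar hNyb m
          linarith
    have := key m
    nlinarith [sq_nonneg ‖y m - ybar‖]
  have hE0 : Tendsto E atTop (nhds 0) := by
    have hbdd : BddBelow (Set.range E) := ⟨0, fun r ⟨n, hn⟩ => hn ▸ hEnonneg n⟩
    have hEc : Tendsto E atTop (nhds (⨅ n, E n)) := tendsto_atTop_ciInf hE_anti hbdd
    have hc0 : (⨅ n, E n) = 0 := by
      by_contra hc
      have hcpos : 0 < ⨅ n, E n :=
        lt_of_le_of_ne (le_ciInf fun n => hEnonneg n) (Ne.symm hc)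
      set c := ⨅ n, E n with hcdef
      have hcE : ∀ n, c ≤ E n := fun n => ciInf_le hbdd n
      have hKb : ∀ m, ∑ n ∈ Finset.range m, lam n * (2 - lam n)
          ≤ 4*‖y 0 - ybar‖^2/c^2 := by
        intro m
        have h1 : ∀ n, lam n * (2 - lam n) * (c^2/4)
            ≤ (lam n / 2)*(1 - lam n / 2)*E n^2 := by
          intro n
          have h2 : c^2 ≤ E n^2 := by nlinarith [hcE n, hcpos.le, hEnonneg n]
          have h3 : 0 ≤ lam n * (2 - lam n) := by
            have := (hlam n).1; have := (hlam n).2; nlinarith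
          nlinarith
        have h4 : ∑ n ∈ Finset.range m, lam n * (2 - lam n) * (c^2/4)
            ≤ ‖y 0 - ybar‖^2 :=
          le_trans (Finset.sum_le_sum fun n _ => h1 n) (hsum_bound m)
        rw [← Finset.sum_mul] at h4
        rw [le_div_iff₀ (by positivity : (0:ℝ) < c^2)]
        nlinarith [h4]
      obtain ⟨m, hm⟩ := (hlamdiv.eventually_gt_atTop (4*‖y 0 - ybar‖^2/c^2)).exists
      exact absurd (hKb m) (not_le.2 hm)
    rwa [hc0] at hEc
  -- first weak cluster point
  obtain ⟨φ0, hφ0, yb, hyb⟩ := weak_seq_compact y C hyC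
  have hfixyb : NDR L α P Pf yb = yb := by
    refine demiclosed hNnonexp (fun j => y (φ0 j)) yb (C + ‖yb‖)
      (fun j => by
        calc ‖y (φ0 j) - yb‖ ≤ ‖y (φ0 j)‖ + ‖yb‖ := norm_sub_le _ _
          _ ≤ C + ‖yb‖ := by linarith [hyC (φ0 j)])
      hyb ?_
    exact hE0.comp hφ0.tendsto_atTop
  -- uniqueness of weak cluster points among fixed points
  have hclu : ∀ q1 q2 : H, NDR L α P Pf q1 = q1 → NDR L α P Pf q2 = q2 →
      (∃ σ : ℕ → ℕ, StrictMono σ ∧ ∀ u : H,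
        Tendsto (fun j => (⟪y (σ j), u⟫ : ℝ)) atTop (nhds (⟪q1, u⟫ : ℝ))) →
      (∃ σ : ℕ → ℕ, StrictMono σ ∧ ∀ u : H,
        Tendsto (fun j => (⟪y (σ j), u⟫ : ℝ)) atTop (nhds (⟪q2, u⟫ : ℝ))) →
      q1 = q2 := by
    intro q1 q2 hq1 hq2 ⟨σ1, hσ1, hw1⟩ ⟨σ2, hσ2, hw2⟩
    have hid : ∀ n, (⟪y n, q1 - q2⟫ : ℝ)
        = (‖y n - q2‖^2 - ‖y n - q1‖^2 + ‖q1‖^2 - ‖q2‖^2)/2 := by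
      intro n
      have e1 : ‖y n - q2‖^2 = ‖y n‖^2 - 2*⟪y n, q2⟫ + ‖q2‖^2 := by
        rw [@norm_sub_sq_real]; try ring
      have e2 : ‖y n - q1‖^2 = ‖y n‖^2 - 2*⟪y n, q1⟫ + ‖q1‖^2 := by
        rw [@norm_sub_sq_real]; try ring
      have e3 : (⟪y n, q1 - q2⟫ : ℝ) = ⟪y n, q1⟫ - ⟪y n, q2⟫ := by
        rw [@inner_sub_right]
      rw [e3, e1, e2]; ring
    have hslim0 := (((hdist_lim q2 hq2).sub (hdist_lim q1 hq1)).add_const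
        (‖q1‖^2 - ‖q2‖^2)).div_const 2
    have hslim : Tendsto (fun n => (⟪y n, q1 - q2⟫ : ℝ)) atTop
        (nhds ((((⨅ n, ‖y n - q2‖^2) - ⨅ n, ‖y n - q1‖^2) + (‖q1‖^2 - ‖q2‖^2))/2)) := by
      refine hslim0.congr fun n => ?_
      rw [hid n]; ring
    have hl1 := tendsto_nhds_unique (hw1 (q1 - q2)) (hslim.comp hσ1.tendsto_atTop)
    have hl2 := tendsto_nhds_unique (hw2 (q1 - q2)) (hslim.comp hσ2.tendsto_atTop)
    have : (⟪q1 - q2, q1 - q2⟫ : ℝ) = 0 := by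
      rw [@inner_sub_left]; rw [hl1, hl2]; ring
    have h0 : ‖q1 - q2‖^2 = 0 := by rw [← real_inner_self_eq_norm_sq]; exact this
    have : q1 - q2 = 0 := norm_eq_zero.1 (pow_eq_zero_iff (n := 2) (by norm_num) |>.1 h0)
    exact sub_eq_zero.1 this
  -- whole sequence y converges weakly to yb
  have hyconv : ∀ u : H, Tendsto (fun n => (⟪y n, u⟫ : ℝ)) atTop (nhds (⟪yb, u⟫ : ℝ)) := by
    refine tendsto_of_subseq_weak y yb C hyC ?_
    intro σ hσ q hq
    have hfixq : NDR L α P Pf q = q := by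
      refine demiclosed hNnonexp (fun j => y (σ j)) q (C + ‖q‖)
        (fun j => by
          calc ‖y (σ j) - q‖ ≤ ‖y (σ j)‖ + ‖q‖ := norm_sub_le _ _
            _ ≤ C + ‖q‖ := by linarith [hyC (σ j)])
        hq ?_
      exact hE0.comp hσ.tendsto_atTop
    exact hclu q yb hfixq hfixyb ⟨σ, hσ, hq⟩ ⟨φ0, hφ0, hyb⟩
  -- the candidate minimizer
  have hvbar : (yb - QopMap L α P yb) ∈ subdiff (comix L g α) (QopMap L α P yb) :=
    (comix_master hg hP hα hαsum hL yb).2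
  have hPfc : Pf ((2:ℝ)•QopMap L α P yb - yb) = QopMap L α P yb := by
    have h : NDR L α P Pf yb = yb := hfixyb
    rw [NDR] at h
    have h1 : (2:ℝ)•Pf ((2:ℝ)•QopMap L α P yb - yb)
        = yb + ((2:ℝ)•QopMap L α P yb - yb) := sub_eq_iff_eq_add.mp h
    have h2 : (2:ℝ)•Pf ((2:ℝ)•QopMap L α P yb - yb) = (2:ℝ)•QopMap L α P yb := by
      rw [h1]; module
    exact smul_right_injective H (two_ne_zero) h2
  have hfsub : (QopMap L α P yb - yb) ∈ subdiff f (QopMap L α P yb) := by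
    have h := prox_subdiff hf hPf ((2:ℝ)•QopMap L α P yb - yb)
    rw [hPfc] at h
    have harg : (2:ℝ)•QopMap L α P yb - yb - QopMap L α P yb = QopMap L α P yb - yb := by
      module
    rwa [harg] at h
  have hmin : ∀ w' : H, f (QopMap L α P yb) + comix L g α (QopMap L α P yb)
      ≤ f w' + comix L g α w' := by
    intro w'
    have h1 := hfsub w'
    have h2 := hvbar w'
    have hadd := add_le_add h1 h2
    rw [add_add_add_comm, ← EReal.coe_add] at hadd
    have hzero : (⟪w' - QopMap L α P yb, QopMap L α P yb - yb⟫
        + ⟪w' - QopMap L α P yb, yb - QopMap L α P yb⟫ : ℝ) = 0 := by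
      rw [← inner_add_right]
      have hz0 : (QopMap L α P yb - yb) + (yb - QopMap L α P yb) = 0 := by abel
      rw [hz0, inner_zero_right]
    rw [hzero] at hadd
    simpa using hadd
  -- boundedness of x
  have hBnonexp := nonexp_of_firm (Qop_firm hg hP hα hαsum hL)
  have hxC : ∀ n, ‖x n‖ ≤ C + ‖yb‖ + ‖QopMap L α P yb‖ := by
    intro n
    have h1 : ‖x n - QopMap L α P yb‖ ≤ ‖y n - yb‖ := by rw [hxB n]; exact hBnonexp _ _
    have h2 : ‖y n - yb‖ ≤ C + ‖yb‖ := (norm_sub_le _ _).trans (by linarith [hyC n])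
    calc ‖x n‖ = ‖(x n - QopMap L α P yb) + QopMap L α P yb‖ := by rw [sub_add_cancel]
      _ ≤ ‖x n - QopMap L α P yb‖ + ‖QopMap L α P yb‖ := norm_add_le _ _
      _ ≤ C + ‖yb‖ + ‖QopMap L α P yb‖ := by linarith
  refine ⟨QopMap L α P yb, hmin, ?_⟩
  refine tendsto_of_subseq_weak x (QopMap L α P yb) (C + ‖yb‖ + ‖QopMap L α P yb‖) hxC ?_
  intro σ hσ q hq
  -- identification of the weak cluster point q
  have hdsub : (((2:ℝ)•q - yb) - Pf ((2:ℝ)•q - yb)) ∈ subdiff f (Pf ((2:ℝ)•q - yb)) :=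
    prox_subdiff hf hPf _
  have hB1 : ∀ n, 0 ≤ ⟪x n - QopMap L α P yb, (y n - x n) - (yb - QopMap L α P yb)⟫ := by
    intro n
    refine subdiff_mono' (comix_ne_bot hg hP hα)
      (comix_ne_top_somewhere hg hP hα hαsum hL) ?_ hvbar
    have hm := (comix_master hg hP hα hαsum hL (y n)).2
    rw [← hxB n] at hm
    exact hm
  have hB2 : ∀ n, 0 ≤ ⟪z n - Pf ((2:ℝ)•q - yb),
      ((2:ℝ)•x n - y n - z n) - (((2:ℝ)•q - yb) - Pf ((2:ℝ)•q - yb))⟫ := by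
    intro n
    refine subdiff_mono hf ?_ hdsub
    have h := prox_subdiff hf hPf ((2:ℝ)•x n - y n)
    rw [← hz n] at h
    have harg : (2:ℝ)•x n - y n - z n = ((2:ℝ)•x n - y n) - z n := by abel
    rw [harg]
    exact h
  have he0 : Tendsto (fun n => ‖x n - z n‖) atTop (nhds 0) := by
    have hnorm : ∀ n, ‖x n - z n‖ = 2⁻¹ * E n := by
      intro n
      have h1 : x n - z n = -(z n - x n) := by abel
      rw [h1, norm_neg, hzxN n, norm_smul]
      norm_num
      rfl
    simp only [hnorm]
    have := hE0.const_mul (2⁻¹:ℝ)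
    simpa using this
  -- notation
  set a : H := QopMap L α P yb with hadef
  set b : H := yb - a with hbdef
  set cc : H := Pf ((2:ℝ)•q - yb) with hccdef
  set d : H := ((2:ℝ)•q - yb) - cc with hddef
  clear_value a b cc d
  have hT_id : ∀ n, ⟪x n - a, (y n - x n) - b⟫
      + ⟪z n - cc, ((2:ℝ)•x n - y n - z n) - d⟫
      = (⟪x n - z n, y n + d - cc⟫ - ‖x n - z n‖^2) + ⟪x n, a - b - d - cc⟫
        + ⟪y n, cc - a⟫ + (⟪a, b⟫ + ⟪cc, d⟫) := fun n => T_id (x n) (y n) (z n) a b cc d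
  have ht1 : Tendsto (fun j => (⟪x (σ j) - z (σ j), y (σ j) + d - cc⟫ : ℝ)
      - ‖x (σ j) - z (σ j)‖^2) atTop (nhds 0) := by
    have heσ : Tendsto (fun j => ‖x (σ j) - z (σ j)‖) atTop (nhds 0) :=
      he0.comp hσ.tendsto_atTop
    have hgb : Tendsto (fun j => ‖x (σ j) - z (σ j)‖ * (C + ‖d - cc‖)
        + ‖x (σ j) - z (σ j)‖ * ‖x (σ j) - z (σ j)‖) atTop (nhds 0) := by
      have := (heσ.mul_const (C + ‖d - cc‖)).add (heσ.mul heσ)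
      simpa using this
    refine squeeze_zero_norm (fun j => ?_) hgb
    have hb1 : |(⟪x (σ j) - z (σ j), y (σ j) + d - cc⟫ : ℝ)|
        ≤ ‖x (σ j) - z (σ j)‖ * (C + ‖d - cc‖) := by
      refine (abs_real_inner_le_norm _ _).trans ?_
      refine mul_le_mul_of_nonneg_left ?_ (norm_nonneg _)
      calc ‖y (σ j) + d - cc‖ = ‖y (σ j) + (d - cc)‖ := by rw [add_sub_assoc]
        _ ≤ ‖y (σ j)‖ + ‖d - cc‖ := norm_add_le _ _
        _ ≤ C + ‖d - cc‖ := by linarith [hyC (σ j)]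
    have hb2 : ‖x (σ j) - z (σ j)‖^2 = ‖x (σ j) - z (σ j)‖ * ‖x (σ j) - z (σ j)‖ := sq _
    rw [Real.norm_eq_abs]
    calc |(⟪x (σ j) - z (σ j), y (σ j) + d - cc⟫ : ℝ) - ‖x (σ j) - z (σ j)‖^2|
        ≤ |(⟪x (σ j) - z (σ j), y (σ j) + d - cc⟫ : ℝ)| + |‖x (σ j) - z (σ j)‖^2| :=
          abs_sub _ _
      _ ≤ ‖x (σ j) - z (σ j)‖ * (C + ‖d - cc‖)
            + ‖x (σ j) - z (σ j)‖ * ‖x (σ j) - z (σ j)‖ := by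
          refine add_le_add hb1 ?_
          rw [abs_of_nonneg (sq_nonneg _), hb2]
  have ht2 : Tendsto (fun j => (⟪x (σ j), a - b - d - cc⟫ : ℝ)) atTop
      (nhds (⟪q, a - b - d - cc⟫ : ℝ)) := hq (a - b - d - cc)
  have ht3 : Tendsto (fun j => (⟪y (σ j), cc - a⟫ : ℝ)) atTop
      (nhds (⟪yb, cc - a⟫ : ℝ)) := (hyconv (cc - a)).comp hσ.tendsto_atTop
  have hTlim : Tendsto (fun j => ⟪x (σ j) - a, (y (σ j) - x (σ j)) - b⟫
      + ⟪z (σ j) - cc, ((2:ℝ)•x (σ j) - y (σ j) - z (σ j)) - d⟫) atTop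
      (nhds ((0 + (⟪q, a - b - d - cc⟫ : ℝ) + (⟪yb, cc - a⟫ : ℝ))
        + ((⟪a, b⟫ : ℝ) + (⟪cc, d⟫ : ℝ)))) := by
    have := ((ht1.add ht2).add ht3).add_const ((⟪a, b⟫ : ℝ) + (⟪cc, d⟫ : ℝ))
    refine this.congr fun j => ?_
    rw [← hT_id (σ j)]
  have hTge : 0 ≤ (0 + (⟪q, a - b - d - cc⟫ : ℝ) + (⟪yb, cc - a⟫ : ℝ))
      + ((⟪a, b⟫ : ℝ) + (⟪cc, d⟫ : ℝ)) :=
    ge_of_tendsto hTlim (Eventually.of_forall fun j => add_nonneg (hB1 (σ j)) (hB2 (σ j)))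
  have hfinal : (0 + (⟪q, a - b - d - cc⟫ : ℝ) + (⟪yb, cc - a⟫ : ℝ))
      + ((⟪a, b⟫ : ℝ) + (⟪cc, d⟫ : ℝ)) = - ‖q - a‖^2 - ‖q - cc‖^2 := by
    rw [hbdef, hddef]
    simp only [inner_sub_left, inner_sub_right, inner_add_left, inner_add_right,
      real_inner_smul_left, real_inner_smul_right, real_inner_self_eq_norm_sq,
      @norm_sub_sq_real]
    have c1 := real_inner_comm q yb
    have c2 := real_inner_comm q a
    have c3 := real_inner_comm q cc
    have c4 := real_inner_comm yb a
    have c5 := real_inner_comm yb cc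
    have c6 := real_inner_comm a cc
    linarith
  rw [hfinal] at hTge
  have hq0 : ‖q - a‖^2 = 0 := by nlinarith [sq_nonneg ‖q - a‖, sq_nonneg ‖q - cc‖]
  have : q - a = 0 := norm_eq_zero.1 (pow_eq_zero_iff (n := 2) (by norm_num) |>.1 hq0)
  exact sub_eq_zero.1 this
end
end
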